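/- arXiv:1705.01838 — 11 statements merged into one kernel-verified Lean document; each statement's English description precedes it below -/
import Mathlib

section
/- Let q be a prime power with q odd or q = 2^m for m ≥ 2, let n ≥ 1, and let a ∈ F_q[X_1,...,X_{i-1},X_{i+1},...,X_n]. Then the elementary automorphism E_a : F_q^n → F_q^n sending (x_1,...,x_n) to (x_1,...,x_{i-1}, x_i + a(x_1,...,x_{i-1},x_{i+1},...,x_n), x_{i+1},...,x_n) is an even permutation of F_q^n. -/
open Equiv Equiv.Perm Finset

/-- Powers of `Equiv.addLeft`. -/
lemma addLeft_pow_apply {F : Type} [AddGroup F] (c : F) (k : ℕ) (x : F) :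
    ((Equiv.addLeft c) ^ k) x = k • c + x := by
  induction k generalizing x with
  | zero => simp
  | succ k ih =>
    rw [pow_succ, Equiv.Perm.mul_apply, Equiv.coe_addLeft]
    show (Equiv.addLeft c ^ k) (c + x) = (k + 1) • c + x
    rw [ih, succ_nsmul]
    rw [add_assoc]

/-- Sign of a translation on a finite field of appropriate cardinality. -/
lemma sign_addLeft_aux (q : ℕ)
    (hq : Odd q ∨ ∃ m : ℕ, 2 ≤ m ∧ q = 2 ^ m)
    (F : Type) [Field F] [Fintype F] [DecidableEq F] (hcard : Fintype.card F = q)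
    (c : F) : Equiv.Perm.sign (Equiv.addLeft c) = 1 := by
  rcases hq with hodd | ⟨m, hm, rfl⟩
  · -- odd case: the translation has odd order
    have hpow : (Equiv.addLeft c) ^ q = 1 := by
      ext x
      rw [addLeft_pow_apply, ← hcard, card_nsmul_eq_zero, zero_add, Equiv.Perm.one_apply]
    have hs : (Equiv.Perm.sign (Equiv.addLeft c)) ^ q = 1 := by
      rw [← map_pow, hpow, map_one]
    rcases Int.units_eq_one_or (Equiv.Perm.sign (Equiv.addLeft c)) with h | h
    · exact h
    · rw [h, hodd.neg_one_pow] at hs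
      exact absurd hs (by decide)
  · -- characteristic 2 case
    haveI hp : CharP F (ringChar F) := ringChar.charP F
    obtain ⟨k, hk, hcard2⟩ := FiniteField.card F (ringChar F)
    have hchar : ringChar F = 2 := by
      have hdvd : ringChar F ∣ 2 ^ m := by
        rw [← hcard, hcard2]
        exact dvd_pow_self _ k.ne_zero
      exact (Nat.prime_dvd_prime_iff_eq hk Nat.prime_two).mp (hk.dvd_of_dvd_pow hdvd)
    haveI : CharP F 2 := hchar ▸ hp
    rcases eq_or_ne c 0 with rfl | hc
    · have : Equiv.addLeft (0 : F) = 1 := by ext x; simp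
      rw [this, map_one]
    haveI : Algebra (ZMod 2) F := ZMod.algebra F 2
    set S := Submodule.span (ZMod 2) ({c} : Set F) with hS
    obtain ⟨T, hT⟩ := S.exists_isCompl
    haveI : Fintype S := Fintype.ofFinite S
    haveI : Fintype T := Fintype.ofFinite T
    let e : (S × T) ≃ₗ[ZMod 2] F := Submodule.prodEquivOfIsCompl S T hT
    have hcS : c ∈ S := Submodule.mem_span_singleton_self c
    set cS : S := ⟨c, hcS⟩ with hcSdef
    -- the translation is conjugate to a product permutation
    have hconj : Equiv.addLeft c =
        (e.toEquiv.permCongr (Equiv.prodCongrLeft (fun _ : T => Equiv.addLeft cS))) := by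
      refine Equiv.ext fun x => ?_
      obtain ⟨⟨s, t⟩, rfl⟩ := e.toEquiv.surjective x
      rw [Equiv.permCongr_apply, Equiv.symm_apply_apply]
      simp only [LinearEquiv.coe_toEquiv, Equiv.prodCongrLeft_apply, Equiv.coe_addLeft,
        e, Submodule.coe_prodEquivOfIsCompl', Submodule.coe_add]
      show c + (↑s + ↑t) = (c + ↑s) + ↑t
      ring
    rw [hconj, Equiv.Perm.sign_permCongr, Equiv.Perm.sign_prodCongrLeft]
    -- sign of addLeft cS on S is -1 (it is a transposition)
    have h2 : cS + cS = 0 := by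
      apply Subtype.ext
      show c + c = (0 : F)
      rw [← two_mul, (by norm_num : (2 : F) = (2 : ℕ)), CharP.cast_eq_zero F 2, zero_mul]
    have hswap : Equiv.addLeft cS = Equiv.swap (0 : S) cS := by
      refine Equiv.ext fun x => ?_
      obtain ⟨r, hr⟩ := Submodule.mem_span_singleton.mp x.2
      have hx : x = r • cS := by
        apply Subtype.ext
        rw [← hr]; rfl
      have h01 : ∀ s : ZMod 2, s = 0 ∨ s = 1 := by decide
      rcases h01 r with rfl | rfl
      · rw [hx, zero_smul]
        show cS + 0 = Equiv.swap 0 cS 0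
        rw [add_zero, Equiv.swap_apply_left]
      · rw [hx, one_smul]
        show cS + cS = Equiv.swap 0 cS cS
        rw [h2, Equiv.swap_apply_right]
    have hsign : Equiv.Perm.sign (Equiv.addLeft cS) = -1 := by
      rw [hswap]
      exact Equiv.Perm.sign_swap (fun h => hc (congrArg Subtype.val h.symm))
    rw [Finset.prod_congr rfl (fun t _ => hsign), Finset.prod_const]
    -- card T is even
    have hcardST : Fintype.card S * Fintype.card T = 2 ^ m := by
      rw [← Fintype.card_prod, Fintype.card_congr e.toEquiv, hcard]
    have hcardS : Fintype.card S = 2 := by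
      rw [Fintype.card_congr (LinearEquiv.toSpanNonzeroSingleton (ZMod 2) F c hc).toEquiv.symm,
        ZMod.card]
    have hcardT : Fintype.card T = 2 ^ (m - 1) := by
      have h1 : (2 : ℕ) ^ m = 2 * 2 ^ (m - 1) := by
        rw [← pow_succ']
        congr 1
        omega
      rw [hcardS, h1] at hcardST
      omega
    have heven : Even (Fintype.card T) := by
      rw [hcardT, Nat.even_pow]
      exact ⟨even_two, by omega⟩
    rw [Finset.card_univ]
    exact heven.neg_one_pow

/-- For `q` odd or `q = 2^m` with `m ≥ 2`, every elementary
automorphism of `F_q^n` (adding to the `i`-th coordinate a polynomial in the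
other variables) is an even permutation. -/
theorem stmt0 (q n : ℕ) (hn : 1 ≤ n)
    (hq : Odd q ∨ ∃ m : ℕ, 2 ≤ m ∧ q = 2 ^ m)
    (F : Type) [Field F] [Fintype F] [DecidableEq F] (hcard : Fintype.card F = q)
    (i : Fin n) (a : MvPolynomial {j : Fin n // j ≠ i} F)
    (σ : Equiv.Perm (Fin n → F))
    (hσ : ∀ x, σ x = Function.update x i
      (x i + MvPolynomial.eval (fun j => x j.1) a)) :
    Equiv.Perm.sign σ = 1 := by
  classical
  set e := Equiv.funSplitAt i F with he
  have hconj : e.permCongr σ =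
      Equiv.prodCongrLeft (fun z : ({j : Fin n // j ≠ i} → F) =>
        Equiv.addLeft (MvPolynomial.eval z a)) := by
    refine Equiv.ext fun p => ?_
    obtain ⟨y, z⟩ := p
    set x : Fin n → F := e.symm (y, z) with hx
    have hxi : x i = y := by simp [hx, he, Equiv.funSplitAt]
    have hxz : ∀ j : {j : Fin n // j ≠ i}, x j.1 = z j := by
      intro j
      simp [hx, he, Equiv.funSplitAt, dif_neg j.2]
    have h1 : e.permCongr σ (y, z) = e (σ x) := rfl
    rw [h1, hσ x]
    have h2 : e (Function.update x i (x i + MvPolynomial.eval (fun j => x j.1) a)) =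
        (x i + MvPolynomial.eval (fun j => x j.1) a, fun j : {j : Fin n // j ≠ i} => x j.1) := by
      apply Prod.ext
      · simp [he, Equiv.funSplitAt]
      · funext j
        simp [he, Equiv.funSplitAt, Function.update_of_ne j.2]
    rw [h2]
    have hz : (fun j : {j : Fin n // j ≠ i} => x j.1) = z := funext hxz
    rw [hz, hxi]
    simp [add_comm]
  have : Equiv.Perm.sign σ = Equiv.Perm.sign (e.permCongr σ) :=
    (Equiv.Perm.sign_permCongr e σ).symm
  rw [this, hconj, Equiv.Perm.sign_prodCongrLeft]
  exact Finset.prod_eq_one (fun z _ => sign_addLeft_aux q hq F hcard _)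
end

section
/- Let q = 2, let n ≥ 1, and let a ∈ F_2[X_1,...,X_{i-1},X_{i+1},...,X_n]. The elementary automorphism E_a of F_2^n (adding a to the i-th coordinate) is an odd permutation if and only if the number of monomials of a that involve all of the variables X_1,...,X_{i-1},X_{i+1},...,X_n (i.e. every variable except X_i appears with exponent ≥ 1) is odd. Equivalently, sgn(E_a) = (-1)^{M_a}, where M_a is the number of such monomials appearing in a with nonzero coefficient. -/
open Finset

lemma zmod2_sum_pow (e : ℕ) : (∑ t : ZMod 2, t ^ e) = if e = 0 then 0 else 1 := by
  have huniv : (Finset.univ : Finset (ZMod 2)) = {0, 1} := by decide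
  rw [huniv, Finset.sum_pair (by decide : (0 : ZMod 2) ≠ 1)]
  cases e with
  | zero => decide
  | succ k => simp [zero_pow]

lemma zmod2_cases (c : ZMod 2) : c = 0 ∨ c = 1 := by revert c; decide

lemma neg_one_pow_congr_zmod2 {N M : ℕ} (h : (N : ZMod 2) = (M : ZMod 2)) :
    ((-1 : ℤˣ)) ^ N = (-1) ^ M := by
  have h2 : N % 2 = M % 2 := (ZMod.natCast_eq_natCast_iff N M 2).mp h
  rcases Nat.even_or_odd N with hN | hN
  · have hM : Even M := by rw [Nat.even_iff] at hN ⊢; omega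
    rw [hN.neg_one_pow, hM.neg_one_pow]
  · have hM : Odd M := by rw [Nat.odd_iff] at hN ⊢; omega
    rw [hN.neg_one_pow, hM.neg_one_pow]

/-- Over `F_2`, the sign of the elementary automorphism `E_a`
equals `(-1)^{M_a}`, where `M_a` is the number of monomials of `a` in which
every variable other than `X_i` appears with positive exponent. -/
theorem stmt1 (n : ℕ) (hn : 1 ≤ n) (i : Fin n)
    (a : MvPolynomial {j : Fin n // j ≠ i} (ZMod 2))
    (σ : Equiv.Perm (Fin n → ZMod 2))
    (hσ : ∀ x, σ x = Function.update x i
      (x i + MvPolynomial.eval (fun j => x j.1) a))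
    (M : ℕ)
    (hM : M = (a.support.filter (fun s => ∀ j : {j : Fin n // j ≠ i}, 1 ≤ s j)).card) :
    Equiv.Perm.sign σ = (-1) ^ M := by
  classical
  have hσeq : σ = (Equiv.funSplitAt i (ZMod 2)).symm.permCongr
      (Equiv.prodCongrLeft (fun y : {j : Fin n // j ≠ i} → ZMod 2 =>
        Equiv.addLeft (MvPolynomial.eval y a))) := by
    ext x j
    rw [hσ]
    simp only [Equiv.permCongr_apply, Equiv.symm_symm, Equiv.prodCongrLeft_apply,
      Equiv.funSplitAt_apply, Equiv.coe_addLeft, Equiv.funSplitAt_symm_apply]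
    by_cases h : j = i
    · subst h
      simp [add_comm]
    · simp [Function.update_of_ne h, h]
  set N : ℕ := (Finset.univ.filter
    (fun y : {j : Fin n // j ≠ i} → ZMod 2 => MvPolynomial.eval y a = 1)).card with hN
  have hsign : Equiv.Perm.sign σ = (-1) ^ N := by
    rw [hσeq, Equiv.Perm.sign_permCongr, Equiv.Perm.sign_prodCongrLeft]
    have hterm : ∀ y : {j : Fin n // j ≠ i} → ZMod 2,
        Equiv.Perm.sign (Equiv.addLeft (MvPolynomial.eval y a)) =
        if MvPolynomial.eval y a = 1 then (-1 : ℤˣ) else 1 := by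
      intro y
      rcases zmod2_cases (MvPolynomial.eval y a) with hc | hc
      · have h0 : Equiv.addLeft (0 : ZMod 2) = Equiv.refl (ZMod 2) := by ext t; simp
        simp [hc, h0]
      · have h1 : Equiv.addLeft (1 : ZMod 2) = Equiv.swap 0 1 := by
          ext t; revert t; decide
        rw [hc, h1, if_pos rfl]
        exact Equiv.Perm.sign_swap (by decide)
    rw [Finset.prod_congr rfl (fun y _ => hterm y), Finset.prod_ite, Finset.prod_const,
      Finset.prod_const, one_pow, mul_one, hN]
  rw [hsign]
  apply neg_one_pow_congr_zmod2
  have hsum1 : (∑ y : {j : Fin n // j ≠ i} → ZMod 2, MvPolynomial.eval y a) = (N : ZMod 2) := by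
    rw [← Finset.sum_filter_of_ne
      (p := fun y : {j : Fin n // j ≠ i} → ZMod 2 => MvPolynomial.eval y a = 1)
      (by intro y _ h
          rcases zmod2_cases (MvPolynomial.eval y a) with hc | hc
          · exact absurd hc h
          · exact hc)]
    rw [Finset.sum_congr rfl (fun y hy => (Finset.mem_filter.mp hy).2), Finset.sum_const,
      hN, nsmul_eq_mul, mul_one]
  have hsum2 : (∑ y : {j : Fin n // j ≠ i} → ZMod 2, MvPolynomial.eval y a) = (M : ZMod 2) := by
    simp_rw [MvPolynomial.eval_eq']
    rw [Finset.sum_comm]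
    have key : ∀ s ∈ a.support,
        (∑ y : {j : Fin n // j ≠ i} → ZMod 2,
          MvPolynomial.coeff s a * ∏ j, y j ^ s j) =
        if (∀ j : {j : Fin n // j ≠ i}, 1 ≤ s j) then 1 else 0 := by
      intro s hs
      rw [← Finset.mul_sum]
      have hcoeff : MvPolynomial.coeff s a = 1 := by
        have h0 : MvPolynomial.coeff s a ≠ 0 := MvPolynomial.mem_support_iff.mp hs
        rcases zmod2_cases (MvPolynomial.coeff s a) with hc | hc
        · exact absurd hc h0
        · exact hc
      rw [hcoeff, one_mul,
        ← Fintype.prod_sum (f := fun (j : {j : Fin n // j ≠ i}) (t : ZMod 2) => t ^ s j)]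
      by_cases hall : ∀ j : {j : Fin n // j ≠ i}, 1 ≤ s j
      · rw [if_pos hall]
        apply Finset.prod_eq_one
        intro j _
        rw [zmod2_sum_pow, if_neg (by have := hall j; omega)]
      · rw [if_neg hall]
        push_neg at hall
        obtain ⟨j, hj⟩ := hall
        apply Finset.prod_eq_zero (Finset.mem_univ j)
        rw [zmod2_sum_pow, if_pos (by omega)]
    rw [Finset.sum_congr rfl key, Finset.sum_ite, Finset.sum_const, Finset.sum_const,
      smul_zero, add_zero, nsmul_eq_mul, mul_one, hM]
  rw [← hsum1, hsum2]
end

section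
/- Let q be a prime power, n ≥ 2, and let c be a nonzero element of F_q. Fix an index i and a monomial m = ∏_{j ≠ i} X_j^{e_j} in the variables other than X_i in which every variable X_j (j ≠ i) appears with exponent e_j ≥ 1. Then the permutation of F_q^n sending (x_1,...,x_n) to (x_1,...,x_{i-1}, x_i + c·∏_{j≠i} x_j^{e_j}, x_{i+1},...,x_n) decomposes as a product of (q-1)^{n-1} · q/p disjoint cycles of length p, where p is the characteristic of F_q. -/
lemma card_subtype_ne' {α : Type*} [Fintype α] [DecidableEq α] (a : α) :
    Fintype.card {x : α // x ≠ a} = Fintype.card α - 1 := by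
  have h := Fintype.card_subtype_compl (fun x : α => x = a)
  simpa [Fintype.card_subtype_eq] using h

/-- For a monomial `c·∏_{j≠i} X_j^{e_j}` with `c ≠ 0` and all
`e_j ≥ 1`, the elementary automorphism adding it to the `i`-th coordinate
decomposes as a product of `(q-1)^{n-1} · p^{m-1}` disjoint cycles of length
`p` (all other points fixed), where `q = p^m`. -/
theorem stmt2 (p m q n : ℕ) (hp : p.Prime) (hm : 1 ≤ m) (hq : q = p ^ m)
    (hn : 2 ≤ n)
    (F : Type) [Field F] [Fintype F] [DecidableEq F]
    (hcard : Fintype.card F = q) [CharP F p]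
    (i : Fin n) (c : F) (hc : c ≠ 0)
    (e : {j : Fin n // j ≠ i} → ℕ) (he : ∀ j, 1 ≤ e j)
    (σ : Equiv.Perm (Fin n → F))
    (hσ : ∀ x, σ x = Function.update x i
      (x i + c * ∏ j : {j : Fin n // j ≠ i}, x j.1 ^ e j)) :
    σ.cycleType = Multiset.replicate ((q - 1) ^ (n - 1) * p ^ (m - 1)) p := by
  haveI : Fact p.Prime := ⟨hp⟩
  set M : (Fin n → F) → F := fun x => c * ∏ j : {j : Fin n // j ≠ i}, x j.1 ^ e j with hM
  have hσ' : ∀ x, σ x = Function.update x i (x i + M x) := hσ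
  -- M depends only on coordinates other than i
  have hMup : ∀ (x : Fin n → F) (a : F), M (Function.update x i a) = M x := by
    intro x a
    simp only [hM]
    congr 1
    exact Finset.prod_congr rfl fun j _ => by rw [Function.update_of_ne j.2]
  -- iterates
  have hpow : ∀ (k : ℕ) x, (σ ^ k) x = Function.update x i (x i + (k : F) * M x) := by
    intro k
    induction k with
    | zero =>
      intro x
      simp [Function.update_eq_self]
    | succ k ih =>
      intro x
      rw [pow_succ', Equiv.Perm.mul_apply, ih, hσ', hMup, Function.update_self,
        Function.update_idem]
      congr 1
      push_cast
      ring
  -- σ^p = 1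
  have hσp : σ ^ p = 1 := by
    ext x : 1
    rw [hpow]
    simp [CharP.cast_eq_zero F p, Function.update_eq_self]
  -- σ ≠ 1
  have hσ1 : σ ≠ 1 := by
    intro h
    have h2 := hσ' (fun _ => (1 : F))
    rw [h] at h2
    have h3 := congrFun h2 i
    simp only [Equiv.Perm.one_apply, Function.update_self, hM, one_pow,
      Finset.prod_const_one, mul_one] at h3
    exact hc (by linear_combination -h3)
  have horder : orderOf σ = p := orderOf_eq_prime hσp hσ1
  -- support characterization
  have hsupp : ∀ x : Fin n → F, x ∈ σ.support ↔ ∀ j : {j : Fin n // j ≠ i}, x j.1 ≠ 0 := by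
    intro x
    rw [Equiv.Perm.mem_support, hσ']
    constructor
    · intro h j hj0
      apply h
      have hM0 : M x = 0 := by
        simp only [hM]
        rw [Finset.prod_eq_zero (Finset.mem_univ j)]
        · ring
        · rw [hj0, zero_pow (Nat.one_le_iff_ne_zero.mp (he j))]
      rw [hM0, add_zero, Function.update_eq_self]
    · intro h hx
      have h4 := congrFun hx i
      rw [Function.update_self] at h4
      have hM0 : M x = 0 := by linear_combination h4
      simp only [hM, mul_eq_zero] at hM0
      rcases hM0 with h1 | h1
      · exact hc h1
      · obtain ⟨j, _, hj⟩ := Finset.prod_eq_zero_iff.mp h1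
        exact h j (pow_eq_zero_iff (Nat.one_le_iff_ne_zero.mp (he j))|>.mp hj)
  -- count the support
  have hE : σ.support.card = q * (q - 1) ^ (n - 1) := by
    have hequiv : {x // x ∈ σ.support} ≃
        F × ({j : Fin n // j ≠ i} → {z : F // z ≠ 0}) := by
      refine
        { toFun := fun x => (x.1 i, fun j => ⟨x.1 j.1, ((hsupp x.1).mp x.2) j⟩)
          invFun := fun y =>
            ⟨fun j => if h : j = i then y.1 else (y.2 ⟨j, h⟩).1, ?_⟩
          left_inv := ?_
          right_inv := ?_ }
      · rw [hsupp]
        intro j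
        simp [j.2, (y.2 j).2]
      · rintro ⟨x, hx⟩
        ext j
        by_cases h : j = i <;> simp [h]
      · rintro ⟨y1, y2⟩
        refine Prod.ext (by simp) ?_
        funext j
        ext
        simp [j.2]
    have hcc := Fintype.card_congr hequiv
    rw [Fintype.card_coe, Fintype.card_prod, Fintype.card_fun,
      card_subtype_ne' (0 : F), card_subtype_ne' i, hcard,
      Fintype.card_fin] at hcc
    exact hcc
  obtain ⟨k, hk⟩ := Equiv.Perm.cycleType_prime_order (horder ▸ hp)
  rw [horder] at hk
  have hsum := σ.sum_cycleType
  rw [hk, Multiset.sum_replicate, smul_eq_mul, hE] at hsum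
  have hqp : q * (q - 1) ^ (n - 1) = ((q - 1) ^ (n - 1) * p ^ (m - 1)) * p := by
    rw [hq]
    have h5 : p ^ m = p ^ (m - 1) * p := by
      rw [← pow_succ]; congr 1; omega
    rw [h5]; ring
  have hfin : k + 1 = (q - 1) ^ (n - 1) * p ^ (m - 1) :=
    Nat.eq_of_mul_eq_mul_right hp.pos (by rw [hsum, hqp])
  rw [hk, hfin]
end

section
/- Let q be an odd prime power, n ≥ 1, c ∈ F_q^*, and i ∈ {1,...,n}. Then the sign of the permutation D_i(c) of F_q^n (multiplying the i-th coordinate by c) equals (-1)^h, where h is the discrete logarithm of c with respect to a fixed generator g of the cyclic group F_q^* (i.e., c = g^h with 0 ≤ h ≤ q-2). Equivalently, D_i(c) is odd if and only if c is a non-square in F_q^*. -/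
open Equiv Equiv.Perm

section aux
variable {F : Type} [Field F] [Fintype F] [DecidableEq F]

/-- mult by a unit as a permutation of F -/
noncomputable def mulPerm : Fˣ →* Equiv.Perm F := MulAction.toPermHom Fˣ F

lemma mulPerm_apply (u : Fˣ) (x : F) : mulPerm u x = (u : F) * x := rfl

lemma sign_mulPerm_gen (g : Fˣ) (hg : ∀ u : Fˣ, u ∈ Subgroup.zpowers g)
    (hq : Odd (Fintype.card F)) :
    Equiv.Perm.sign (mulPerm g : Equiv.Perm F) = -1 := by
  have hg1 : g ≠ 1 := by
    rintro rfl
    have : Fintype.card Fˣ = 1 := by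
      refine Fintype.card_eq_one_iff.2 ⟨1, fun u => ?_⟩
      obtain ⟨k, hk⟩ := hg u
      simpa using hk.symm
    rw [Fintype.card_units] at this
    have hc := Fintype.one_lt_card (α := F)
    have h2 : Fintype.card F = 2 := by omega
    rw [h2] at hq; simp [Nat.odd_iff] at hq
  have hgF : (g : F) ≠ 1 := fun h => hg1 (Units.ext h)
  have hfix : ∀ x : F, (mulPerm g : Equiv.Perm F) x = x ↔ x = 0 := by
    intro x
    rw [mulPerm_apply]
    constructor
    · intro hx
      by_contra hx0
      exact hgF (mul_right_cancel₀ hx0 (by simpa using hx))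
    · rintro rfl; simp
  have hcyc : (mulPerm g : Equiv.Perm F).IsCycle := by
    refine ⟨1, by simpa [mulPerm_apply] using hgF, fun y hy => ?_⟩
    have hy0 : y ≠ 0 := fun h => hy (by simp [hfix, h])
    obtain ⟨k, hk⟩ := hg (Units.mk0 y hy0)
    have hk2 : g ^ k = Units.mk0 y hy0 := hk
    refine ⟨k, ?_⟩
    rw [← map_zpow, mulPerm_apply, hk2]
    simp
  have hsupp : (mulPerm g : Equiv.Perm F).support = Finset.univ \ {0} := by
    ext x
    simp [Equiv.Perm.mem_support, hfix x]
  have hcard : (mulPerm g : Equiv.Perm F).support.card = Fintype.card F - 1 := by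
    rw [hsupp]
    simp [Finset.card_sdiff]
  rw [hcyc.sign, hcard]
  have heven : Even (Fintype.card F - 1) := by
    rcases hq with ⟨m, hm⟩
    exact ⟨m, by omega⟩
  rw [heven.neg_one_pow]

end aux

/-- For `q` odd, the sign of the permutation of `F_q^n`
multiplying the `i`-th coordinate by `c = g^h` (where `g` generates `F_q^*`
and `0 ≤ h ≤ q-2`) equals `(-1)^h`; equivalently, it is odd iff `c` is a
non-square in `F_q^*`. -/
theorem stmt6 (q n : ℕ) (hq : Odd q) (hn : 1 ≤ n)
    (F : Type) [Field F] [Fintype F] [DecidableEq F] (hcard : Fintype.card F = q)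
    (g : Fˣ) (hg : ∀ u : Fˣ, u ∈ Subgroup.zpowers g)
    (c : Fˣ) (h : ℕ) (hh : h ≤ q - 2) (hch : c = g ^ h)
    (i : Fin n)
    (σ : Equiv.Perm (Fin n → F))
    (hσ : ∀ x, σ x = Function.update x i ((c : F) * x i)) :
    Equiv.Perm.sign σ = (-1) ^ h ∧
      (Equiv.Perm.sign σ = -1 ↔ ¬ IsSquare c) := by
  have hqF : Odd (Fintype.card F) := hcard ▸ hq
  have hsg : Equiv.Perm.sign (mulPerm g : Equiv.Perm F) = -1 := sign_mulPerm_gen g hg hqF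
  have hsc : Equiv.Perm.sign (mulPerm c : Equiv.Perm F) = (-1) ^ h := by
    rw [hch, map_pow, map_pow, hsg]
  -- conjugate σ to a prodCongrLeft
  have key : Equiv.Perm.sign σ = (-1) ^ h := by
    set e := Equiv.piSplitAt i (fun _ : Fin n => F) with he
    have hconj : e.permCongr σ =
        Equiv.prodCongrLeft (fun _ : ({ j // j ≠ i } → F) => (mulPerm c : Equiv.Perm F)) := by
      ext p
      · simp [he, hσ, Equiv.prodCongrLeft, mulPerm_apply]
      · next x => simp [he, hσ, Equiv.prodCongrLeft, Function.update, x.prop]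
    have hs := Equiv.Perm.sign_permCongr e σ
    rw [hconj, Equiv.Perm.sign_prodCongrLeft, Finset.prod_const, hsc, ← pow_mul, Finset.card_univ] at hs
    rw [← hs]
    have hodd : Odd (Fintype.card ({ j // j ≠ i } → F)) := by
      rw [Fintype.card_fun, hcard]
      exact hq.pow
    rcases Nat.even_or_odd h with he' | he'
    · rw [he'.neg_one_pow, (he'.mul_right _).neg_one_pow]
    · rw [he'.neg_one_pow, (he'.mul hodd).neg_one_pow]
  refine ⟨key, ?_⟩
  rw [key]
  have hcardu : orderOf g = q - 1 := by
    rw [orderOf_eq_card_of_forall_mem_zpowers hg, Nat.card_eq_fintype_card,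
      Fintype.card_units, hcard]
  have h2dvd : (2 : ℕ) ∣ q - 1 := by
    rcases hq with ⟨m, hm⟩
    have hq1 : 1 ≤ q := by omega
    exact ⟨m, by omega⟩
  constructor
  · intro hs hsq
    obtain ⟨d, hd⟩ := hsq
    obtain ⟨k, hk0⟩ := hg d
    have hk : g ^ k = d := hk0
    have hck : (g : Fˣ) ^ (h : ℤ) = g ^ (k + k) := by
      rw [zpow_natCast, ← hch, hd, ← hk, ← zpow_add]
    rw [zpow_eq_zpow_iff_modEq] at hck
    have hdvd : ((orderOf g : ℤ)) ∣ (k + k) - (h : ℤ) := hck.dvd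
    have h2 : (2 : ℤ) ∣ (k + k) - (h : ℤ) := by
      refine dvd_trans ?_ hdvd
      rw [hcardu]
      exact_mod_cast Int.natCast_dvd_natCast.2 h2dvd
    have hhe : Even h := by
      have hev : Even ((k + k) - (h : ℤ)) := by
        rcases h2 with ⟨t, ht⟩; exact ⟨t, by omega⟩
      rw [Int.even_sub] at hev
      have hevh : Even (h : ℤ) := hev.1 ⟨k, rfl⟩
      exact_mod_cast hevh
    rw [hhe.neg_one_pow] at hs
    exact absurd hs (by decide)
  · intro hns
    rcases Nat.even_or_odd h with he' | he'
    · obtain ⟨m, rfl⟩ := he'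
      exact absurd ⟨g ^ m, by rw [hch, pow_add]⟩ hns
    · rw [he'.neg_one_pow]
end

section
/- Let q = 2^m with m ≥ 2 and n ≥ 1. Every affine automorphism of F_q^n, i.e., every map x ↦ Ax + b with A ∈ GL_n(F_q) and b ∈ F_q^n, induces an even permutation of F_q^n. -/
set_option linter.unusedSectionVars false

open Matrix Equiv

section aux
variable {n : ℕ} {F : Type} [Field F] [Fintype F] [DecidableEq F]

noncomputable def permM (M : Matrix (Fin n) (Fin n) F) (h : IsUnit M.det) :
    Equiv.Perm (Fin n → F) :=
  Equiv.ofBijective M.mulVec (Finite.injective_iff_bijective.mp fun x y hxy => by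
    have h2 := congrArg (M⁻¹.mulVec) hxy
    simpa [Matrix.mulVec_mulVec, Matrix.nonsing_inv_mul M h] using h2)

@[simp] lemma permM_apply (M : Matrix (Fin n) (Fin n) F) (h : IsUnit M.det) (x : Fin n → F) :
    permM M h x = M.mulVec x := rfl

lemma permM_mul (M N : Matrix (Fin n) (Fin n) F) (hM : IsUnit M.det) (hN : IsUnit N.det)
    (hMN : IsUnit (M * N).det) : permM (M * N) hMN = permM M hM * permM N hN :=
  Equiv.ext fun x => by simp [Matrix.mulVec_mulVec]

lemma permM_one (h : IsUnit (1 : Matrix (Fin n) (Fin n) F).det) : permM 1 h = 1 :=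
  Equiv.ext fun x => by simp [Matrix.one_mulVec]

lemma permM_pow (M : Matrix (Fin n) (Fin n) F) (h : IsUnit M.det) (k : ℕ)
    (hk : IsUnit (M ^ k).det) : permM (M ^ k) hk = (permM M h) ^ k := by
  induction k with
  | zero => simp only [pow_zero]; exact permM_one _
  | succ k ih =>
      have hk' : IsUnit (M ^ k).det := by rw [Matrix.det_pow]; exact h.pow k
      have h2 : permM M h ^ (k + 1) = permM (M ^ k) hk' * permM M h := by
        rw [ih hk', pow_succ]
      refine Equiv.ext fun x => ?_
      rw [h2]
      simp [Matrix.mulVec_mulVec, ← pow_succ]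

lemma sign_eq_one_of_odd_pow {α : Type} [DecidableEq α] [Fintype α] (σ : Equiv.Perm α) (k : ℕ)
    (hk : Odd k) (h : σ ^ k = 1) : Equiv.Perm.sign σ = 1 := by
  have h2 : (Equiv.Perm.sign σ) ^ k = 1 := by rw [← map_pow, h, _root_.map_one]
  rcases Int.units_eq_one_or (Equiv.Perm.sign σ) with h1 | h1
  · exact h1
  · rw [h1, hk.neg_one_pow] at h2
    exact absurd h2 (by decide)

lemma sign_permM_diagonal (hodd : Odd (Fintype.card F - 1)) (D : Fin n → F)
    (h : IsUnit (Matrix.diagonal D).det) :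
    Equiv.Perm.sign (permM (Matrix.diagonal D) h) = 1 := by
  have hD : ∀ i, D i ≠ 0 := by
    intro i hi
    rw [Matrix.det_diagonal] at h
    exact h.ne_zero (Finset.prod_eq_zero (Finset.mem_univ i) hi)
  have hMk : (Matrix.diagonal D) ^ (Fintype.card F - 1) = 1 := by
    have hDk : D ^ (Fintype.card F - 1) = 1 := funext fun i => by
      rw [Pi.pow_apply]; exact FiniteField.pow_card_sub_one_eq_one (D i) (hD i)
    rw [Matrix.diagonal_pow, hDk]; exact Matrix.diagonal_one
  apply sign_eq_one_of_odd_pow _ _ hodd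
  have hk : IsUnit ((Matrix.diagonal D) ^ (Fintype.card F - 1)).det := by
    rw [Matrix.det_pow]; exact h.pow _
  rw [← permM_pow _ h _ hk]
  refine Equiv.ext fun x => ?_
  simp [hMk, Matrix.one_mulVec]

lemma exists_good (hbig : 2 < Fintype.card F) : ∃ l : F, l ≠ 0 ∧ 1 + l ≠ 0 := by
  by_contra hcon
  push_neg at hcon
  have hsub : (Finset.univ : Finset F) ⊆ {0, -1} := by
    intro x _
    rcases eq_or_ne x 0 with rfl | hx
    · simp
    · have := hcon x hx
      have : x = -1 := by linear_combination this
      simp [this]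
  have := Finset.card_le_card hsub
  rw [Finset.card_univ] at this
  have h2 : ({0, -1} : Finset F).card ≤ 2 :=
    (Finset.card_insert_le _ _).trans (by simp)
  omega


lemma conj_transvection {i j : Fin n} (hij : i ≠ j) (c l : F) (hl : l ≠ 0) :
    Matrix.diagonal (fun k => if k = i then l else 1) * Matrix.transvection i j c *
      Matrix.diagonal (fun k => if k = i then l⁻¹ else 1) = Matrix.transvection i j (l * c) := by
  ext a b
  simp only [Matrix.mul_diagonal, Matrix.diagonal_mul, Matrix.transvection, Matrix.add_apply,
    Matrix.one_apply, Matrix.single, Matrix.of_apply]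
  split_ifs <;> first
    | (exfalso; omega)
    | ring1
    | simp [mul_inv_cancel₀ hl, hl]

lemma sign_permM_transvection (hodd : Odd (Fintype.card F - 1)) (hbig : 2 < Fintype.card F)
    {i j : Fin n} (hij : i ≠ j) (c : F) (h : IsUnit (Matrix.transvection i j c).det) :
    Equiv.Perm.sign (permM (Matrix.transvection i j c) h) = 1 := by
  have hdet : ∀ c : F, IsUnit (Matrix.transvection i j c).det := fun c => by
    rw [Matrix.det_transvection_of_ne i j hij]; exact isUnit_one
  set s : F → ℤˣ := fun c => Equiv.Perm.sign (permM (Matrix.transvection i j c) (hdet c)) with hs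
  suffices hmain : ∀ c, s c = 1 from hmain c
  have hadd : ∀ c d : F, s (c + d) = s c * s d := by
    intro c d
    have he : permM (Matrix.transvection i j (c + d)) (hdet _) =
        permM (Matrix.transvection i j c) (hdet _) *
          permM (Matrix.transvection i j d) (hdet _) := by
      refine Equiv.ext fun x => ?_
      simp [Matrix.mulVec_mulVec, Matrix.transvection_mul_transvection_same i j hij]
    try simp only [hs]
    rw [he, _root_.map_mul]
  have hscale : ∀ (l : F), l ≠ 0 → ∀ c : F, s (l * c) = s c := by
    intro l hl c
    have hdl : IsUnit (Matrix.diagonal (fun k : Fin n => if k = i then l else 1)).det := by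
      rw [Matrix.det_diagonal]
      apply IsUnit.of_mul_eq_one (∏ k : Fin n, if k = i then l⁻¹ else 1)
      rw [← Finset.prod_mul_distrib]
      apply Finset.prod_eq_one
      intro k _
      rcases eq_or_ne k i with rfl | hk
      · simp [mul_inv_cancel₀ hl]
      · simp [hk]
    have hdl' : IsUnit (Matrix.diagonal (fun k : Fin n => if k = i then l⁻¹ else 1)).det := by
      rw [Matrix.det_diagonal]
      apply IsUnit.of_mul_eq_one (∏ k : Fin n, if k = i then l else 1)
      rw [← Finset.prod_mul_distrib]
      apply Finset.prod_eq_one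
      intro k _
      rcases eq_or_ne k i with rfl | hk
      · simp [inv_mul_cancel₀ hl]
      · simp [hk]
    have he : permM (Matrix.transvection i j (l * c)) (hdet _) =
        permM (Matrix.diagonal (fun k : Fin n => if k = i then l else 1)) hdl *
          permM (Matrix.transvection i j c) (hdet _) *
          permM (Matrix.diagonal (fun k : Fin n => if k = i then l⁻¹ else 1)) hdl' := by
      refine Equiv.ext fun x => ?_
      simp only [Equiv.Perm.mul_apply, permM_apply, Matrix.mulVec_mulVec]
      rw [← Matrix.mul_assoc, conj_transvection hij c l hl]
    try simp only [hs]
    rw [he, _root_.map_mul, _root_.map_mul, sign_permM_diagonal hodd _ hdl,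
      sign_permM_diagonal hodd _ hdl', one_mul, mul_one]
  intro c
  rcases eq_or_ne c 0 with rfl | hc
  · have he : permM (Matrix.transvection i j (0 : F)) (hdet 0) = 1 := by
      refine Equiv.ext fun x => ?_
      simp [Matrix.transvection_zero, Matrix.one_mulVec]
    try simp only [hs]
    rw [he, _root_.map_one]
  · obtain ⟨l, hl0, hl1⟩ := exists_good (F := F) hbig
    have e1 : s ((1 + l) * c) = s c * s (l * c) := by rw [add_mul, one_mul, hadd]
    rw [hscale l hl0 c, hscale (1 + l) hl1 c] at e1
    exact (left_eq_mul.mp e1)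

lemma sign_addRight (hodd : Odd (Fintype.card F - 1)) (hbig : 2 < Fintype.card F)
    (b : Fin n → F) : Equiv.Perm.sign (Equiv.addRight b) = 1 := by
  set s : (Fin n → F) → ℤˣ := fun b => Equiv.Perm.sign (Equiv.addRight b) with hs
  have hadd : ∀ u v : Fin n → F, s (u + v) = s u * s v := by
    intro u v
    have he : Equiv.addRight (u + v) = Equiv.addRight u * Equiv.addRight v := by
      refine Equiv.ext fun x => ?_
      simp only [Equiv.Perm.mul_apply, Equiv.coe_addRight]
      rw [add_comm u v, ← add_assoc]
    try simp only [hs]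
    rw [he, _root_.map_mul]
  have hscale : ∀ (l : F), l ≠ 0 → ∀ u : Fin n → F, s (l • u) = s u := by
    intro l hl u
    have hdl : IsUnit (Matrix.diagonal (fun _ : Fin n => l)).det := by
      rw [Matrix.det_diagonal, Finset.prod_const]
      exact (isUnit_iff_ne_zero.mpr hl).pow _
    have he : permM (Matrix.diagonal (fun _ : Fin n => l)) hdl * Equiv.addRight u =
        Equiv.addRight (l • u) * permM (Matrix.diagonal (fun _ : Fin n => l)) hdl := by
      refine Equiv.ext fun x => ?_
      simp only [Equiv.Perm.mul_apply, Equiv.coe_addRight, permM_apply]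
      funext k
      simp [Matrix.mulVec_diagonal, mul_add]
    have h2 := congrArg Equiv.Perm.sign he
    rw [_root_.map_mul, _root_.map_mul, sign_permM_diagonal hodd _ hdl, one_mul, mul_one] at h2
    try simp only [hs]
    exact h2.symm
  rcases eq_or_ne b 0 with rfl | hb
  · have he : Equiv.addRight (0 : Fin n → F) = 1 := Equiv.ext fun x => by simp
    try simp only [hs]
    rw [he, _root_.map_one]
  · obtain ⟨l, hl0, hl1⟩ := exists_good (F := F) hbig
    have e1 : s ((1 + l) • b) = s b * s (l • b) := by rw [add_smul, one_smul, hadd]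
    rw [hscale l hl0 b, hscale (1 + l) hl1 b] at e1
    exact (left_eq_mul.mp e1)

lemma sign_permM (hodd : Odd (Fintype.card F - 1)) (hbig : 2 < Fintype.card F)
    (M : Matrix (Fin n) (Fin n) F) (h : IsUnit M.det) :
    Equiv.Perm.sign (permM M h) = 1 := by
  refine Matrix.diagonal_transvection_induction_of_det_ne_zero
    (fun N => ∀ hN : IsUnit N.det, Equiv.Perm.sign (permM N hN) = 1) M h.ne_zero
    ?_ ?_ ?_ h
  · intro D _ hD
    exact sign_permM_diagonal hodd D hD
  · rintro ⟨i, j, hij, c⟩ hN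
    exact sign_permM_transvection hodd hbig hij c hN
  · intro A B hdA hdB hPA hPB hAB
    have hA : IsUnit A.det := isUnit_iff_ne_zero.mpr hdA
    have hB : IsUnit B.det := isUnit_iff_ne_zero.mpr hdB
    rw [permM_mul A B hA hB hAB, _root_.map_mul, hPA hA, hPB hB, one_mul]

end aux
/-- For `q = 2^m`, `m ≥ 2`, every affine automorphism
`x ↦ Ax + b` of `F_q^n` induces an even permutation. -/
theorem stmt9 (m n : ℕ) (hm : 2 ≤ m) (hn : 1 ≤ n)
    (F : Type) [Field F] [Fintype F] [DecidableEq F]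
    (hcard : Fintype.card F = 2 ^ m)
    (A : Matrix (Fin n) (Fin n) F) (hA : IsUnit A) (b : Fin n → F)
    (σ : Equiv.Perm (Fin n → F))
    (hσ : ∀ x, σ x = A.mulVec x + b) :
    Equiv.Perm.sign σ = 1 := by
  have hbig : 2 < Fintype.card F := by
    rw [hcard]
    have : (2 : ℕ) ^ 2 ≤ 2 ^ m := Nat.pow_le_pow_right (by norm_num) hm
    omega
  have hodd : Odd (Fintype.card F - 1) := by
    rw [hcard]
    refine Nat.Even.sub_odd Nat.one_le_two_pow ?_ odd_one
    exact Nat.even_pow.mpr ⟨even_two, by omega⟩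
  have hAdet : IsUnit A.det := (Matrix.isUnit_iff_isUnit_det A).mp hA
  have hσ2 : σ = Equiv.addRight b * permM A hAdet := by
    refine Equiv.ext fun x => ?_
    simp [hσ x]
  rw [hσ2, _root_.map_mul, sign_addRight hodd hbig, sign_permM hodd hbig A hAdet, one_mul]
end

section
/- Let q be an odd prime power and n ≥ 1. Let J be the triangular automorphism of F_q^n given by J(x_1,...,x_n) = (a_1 x_1 + f_1(x_2,...,x_n), a_2 x_2 + f_2(x_3,...,x_n), ..., a_n x_n + f_n), where a_i ∈ F_q^*, f_i ∈ F_q[X_{i+1},...,X_n] for i < n, and f_n ∈ F_q. Then the sign of the permutation of F_q^n induced by J equals (-1)^{h_1 + ... + h_n}, where a_i = g^{h_i} for a fixed generator g of F_q^*. Equivalently, J is even if and only if the product a_1 a_2 ⋯ a_n is a square in F_q^*. -/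
private lemma units_pow_odd (u : ℤˣ) {m : ℕ} (hm : Odd m) : u ^ m = u := by
  obtain ⟨k, rfl⟩ := hm
  rw [pow_add, pow_mul, Int.units_sq, one_pow, one_mul, pow_one]

private lemma sign_addRight_s14 (F : Type) [Field F] [Fintype F] [DecidableEq F]
    (hodd : Odd (Fintype.card F)) (c : F) :
    Equiv.Perm.sign (Equiv.addRight c : Equiv.Perm F) = 1 := by
  have key : ∀ m : ℕ, ∀ x : F, ((Equiv.addRight c : Equiv.Perm F) ^ m) x = x + m • c := by
    intro m
    induction m with
    | zero => intro x; simp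
    | succ m ih =>
      intro x
      rw [pow_succ', Equiv.Perm.mul_apply, ih, succ_nsmul]
      simp [Equiv.addRight]
      ring
  have h1 : ((Equiv.addRight c : Equiv.Perm F) ^ Fintype.card F) = 1 := by
    ext x
    rw [key]
    simp [nsmul_eq_mul, FiniteField.cast_card_eq_zero]
  have h2 := congrArg Equiv.Perm.sign h1
  rw [map_pow, map_one, units_pow_odd _ hodd] at h2
  exact h2

private lemma sign_units_smul (F : Type) [Field F] [Fintype F] [DecidableEq F]
    (hodd : Odd (Fintype.card F))
    (g : Fˣ) (hg : ∀ u : Fˣ, u ∈ Subgroup.zpowers g) :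
    Equiv.Perm.sign (MulAction.toPermHom Fˣ F g) = -1 := by
  have hcF : 1 < Fintype.card F := Fintype.one_lt_card
  have hou : orderOf g = Fintype.card F - 1 := by
    rw [orderOf_eq_card_of_forall_mem_zpowers hg, Nat.card_eq_fintype_card, Fintype.card_units]
  have hgne : g ≠ 1 := by
    intro hcon
    rw [hcon, orderOf_one] at hou
    obtain ⟨k, hk⟩ := hodd
    omega
  have hgne' : (g : F) ≠ 1 := fun hc => hgne (Units.ext (by simpa using hc))
  set π : Equiv.Perm F := MulAction.toPermHom Fˣ F g with hπ
  have hπapp : ∀ x : F, π x = (g : F) * x := fun x => rfl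
  have hcyc : π.IsCycle := by
    refine ⟨1, ?_, ?_⟩
    · rw [hπapp]; simpa using hgne'
    · intro y hy
      have hy0 : y ≠ 0 := by
        intro h0; rw [h0, hπapp, mul_zero] at hy; exact hy rfl
      obtain ⟨m, hm⟩ := Subgroup.mem_zpowers_iff.mp (hg (Units.mk0 y hy0))
      refine ⟨m, ?_⟩
      have hmz : π ^ m = MulAction.toPermHom Fˣ F (g ^ m) := by rw [map_zpow]
      rw [hmz]
      show ((g ^ m : Fˣ) : F) * 1 = y
      rw [hm, mul_one, Units.val_mk0]
  have hsupp : π.support = {(0 : F)}ᶜ := by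
    ext x
    simp only [Equiv.Perm.mem_support, Finset.mem_compl, Finset.mem_singleton, hπapp]
    constructor
    · intro hx h0; rw [h0, mul_zero] at hx; exact hx rfl
    · intro hx hcon
      exact hgne' (mul_right_cancel₀ hx (by rw [hcon, one_mul]))
  have hcard' : π.support.card = Fintype.card F - 1 := by
    rw [hsupp, Finset.card_compl, Finset.card_singleton]
  rw [hcyc.sign, hcard']
  have hev : Even (Fintype.card F - 1) := Nat.Odd.sub_odd hodd odd_one
  rw [hev.neg_one_pow]

private def chainPerm {X : Type} (n : ℕ) (P : Fin n → Equiv.Perm X) : ℕ → Equiv.Perm X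
  | 0 => 1
  | (m + 1) => if h : m < n then P ⟨m, h⟩ * chainPerm n P m else chainPerm n P m

/-- For `q` odd, the sign of the triangular automorphism
`J(x)_i = a_i x_i + f_i(x_{i+1},…,x_n)` equals `(-1)^{h_1+⋯+h_n}` where
`a_i = g^{h_i}` for a generator `g` of `F_q^*`; equivalently `J` is even iff
`∏ a_i` is a square in `F_q^*`. -/
theorem stmt14 (q n : ℕ) (hq : Odd q) (hn : 1 ≤ n)
    (F : Type) [Field F] [Fintype F] [DecidableEq F] (hcard : Fintype.card F = q)
    (g : Fˣ) (hg : ∀ u : Fˣ, u ∈ Subgroup.zpowers g)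
    (a : Fin n → Fˣ) (h : Fin n → ℕ) (hh : ∀ i, h i ≤ q - 2)
    (hah : ∀ i, a i = g ^ h i)
    (f : ∀ i : Fin n, MvPolynomial {j : Fin n // i < j} F)
    (σ : Equiv.Perm (Fin n → F))
    (hσ : ∀ x i, σ x i = (a i : F) * x i + MvPolynomial.eval (fun j => x j.1) (f i)) :
    Equiv.Perm.sign σ = (-1) ^ (∑ i, h i) ∧
      (Equiv.Perm.sign σ = 1 ↔ IsSquare (∏ i, a i)) := by
  have hoddF : Odd (Fintype.card F) := hcard ▸ hq
  -- the "affine in one coordinate" data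
  let c : ∀ i : Fin n, ({j : Fin n // j ≠ i} → F) → F := fun i y =>
    MvPolynomial.eval (fun j : {j : Fin n // i < j} => y ⟨j.1, ne_of_gt j.2⟩) (f i)
  let e : ∀ i : Fin n, ({j : Fin n // j ≠ i} → F) → Equiv.Perm F := fun i y =>
    (MulAction.toPermHom Fˣ F (a i)).trans (Equiv.addRight (c i y))
  let P : Fin n → Equiv.Perm (Fin n → F) := fun i =>
    ((Equiv.funSplitAt i F).symm).permCongr (Equiv.prodCongrLeft (e i))
  have hPapply : ∀ (i : Fin n) (x : Fin n → F) (j : Fin n),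
      (P i) x j = if hj : j = i then (a i : F) * x i + c i (fun k => x k.1) else x j := by
    intro i x j
    show ((Equiv.funSplitAt i F).symm.permCongr (Equiv.prodCongrLeft (e i))) x j = _
    rw [Equiv.permCongr_apply]
    simp only [Equiv.symm_symm, Equiv.funSplitAt_apply, Equiv.prodCongrLeft_apply,
      Equiv.funSplitAt_symm_apply]
    by_cases hj : j = i
    · subst hj
      simp only [dif_pos rfl]
      rfl
    · simp only [dif_neg hj]
  have hsignP : ∀ i : Fin n, Equiv.Perm.sign (P i) = (-1) ^ (h i) := by
    intro i
    show Equiv.Perm.sign (((Equiv.funSplitAt i F).symm).permCongr (Equiv.prodCongrLeft (e i))) = _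
    rw [Equiv.Perm.sign_permCongr, Equiv.Perm.sign_prodCongrLeft]
    have h1 : ∀ y : {j : Fin n // j ≠ i} → F, Equiv.Perm.sign (e i y) = (-1) ^ (h i) := by
      intro y
      show Equiv.Perm.sign
        ((MulAction.toPermHom Fˣ F (a i)).trans (Equiv.addRight (c i y))) = _
      rw [← Equiv.Perm.mul_def, map_mul, sign_addRight_s14 F hoddF, one_mul, hah, map_pow,
        map_pow, sign_units_smul F hoddF g hg]
    rw [Finset.prod_congr rfl (fun y _ => h1 y), Finset.prod_const]
    have hoddY : Odd (Fintype.card ({j : Fin n // j ≠ i} → F)) := by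
      rw [Fintype.card_fun]; exact hoddF.pow
    rw [Finset.card_univ]
    exact units_pow_odd _ hoddY
  -- the chain of elementary permutations
  have hstep : ∀ (m : ℕ) (hmn : m < n),
      chainPerm n P (m + 1) = P ⟨m, hmn⟩ * chainPerm n P m := by
    intro m hmn
    simp only [chainPerm, dif_pos hmn]
  have hCapp : ∀ m : ℕ, m ≤ n → ∀ (x : Fin n → F) (j : Fin n),
      (chainPerm n P m) x j = if (j : ℕ) < m then σ x j else x j := by
    intro m
    induction m with
    | zero => intro _ x j; simp [chainPerm]
    | succ m ih =>
      intro hm x j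
      have hmn : m < n := hm
      have ihm := ih (le_of_lt hmn)
      rw [hstep m hmn, Equiv.Perm.mul_apply, hPapply]
      by_cases hj : j = (⟨m, hmn⟩ : Fin n)
      · subst hj
        rw [dif_pos rfl]
        have h1 : chainPerm n P m x ⟨m, hmn⟩ = x ⟨m, hmn⟩ := by
          rw [ihm]; simp
        have hy : (fun j : {j : Fin n // (⟨m, hmn⟩ : Fin n) < j} => chainPerm n P m x j.1) =
            (fun j => x j.1) := by
          funext k
          rw [ihm, if_neg]
          have hk : m < (k.1 : ℕ) := k.2
          omega
        have h2 : c ⟨m, hmn⟩ (fun k => chainPerm n P m x k.1) =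
            MvPolynomial.eval (fun j : {j : Fin n // (⟨m, hmn⟩ : Fin n) < j} => x j.1)
              (f ⟨m, hmn⟩) := by
          show MvPolynomial.eval
            (fun j : {j : Fin n // (⟨m, hmn⟩ : Fin n) < j} => chainPerm n P m x j.1)
            (f ⟨m, hmn⟩) = _
          rw [hy]
        rw [h1, h2, if_pos (show (((⟨m, hmn⟩ : Fin n) : ℕ)) < m + 1 by simp), hσ]
      · rw [dif_neg hj, ihm]
        have hne : (j : ℕ) ≠ m := fun hc => hj (Fin.ext hc)
        by_cases hlt : (j : ℕ) < m
        · rw [if_pos hlt, if_pos (by omega)]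
        · rw [if_neg hlt, if_neg (by omega)]
  have hsigma : σ = chainPerm n P n := by
    apply Equiv.ext
    intro x
    funext j
    rw [hCapp n le_rfl x j, if_pos j.isLt]
  have hsignC : ∀ m : ℕ, m ≤ n → Equiv.Perm.sign (chainPerm n P m) =
      (-1) ^ (∑ i ∈ Finset.univ.filter (fun i : Fin n => (i : ℕ) < m), h i) := by
    intro m
    induction m with
    | zero => intro _; simp [chainPerm]
    | succ m ih =>
      intro hm
      have hmn : m < n := hm
      rw [hstep m hmn, map_mul, hsignP, ih (le_of_lt hmn)]
      have hset : Finset.univ.filter (fun i : Fin n => (i : ℕ) < m + 1) =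
          insert (⟨m, hmn⟩ : Fin n) (Finset.univ.filter (fun i : Fin n => (i : ℕ) < m)) := by
        ext i
        simp only [Finset.mem_filter, Finset.mem_univ, true_and, Finset.mem_insert, Fin.ext_iff]
        omega
      rw [hset, Finset.sum_insert (by simp), pow_add]
  have hmain : Equiv.Perm.sign σ = (-1) ^ (∑ i, h i) := by
    rw [hsigma, hsignC n le_rfl]
    congr 1
    apply Finset.sum_congr _ (fun _ _ => rfl)
    apply Finset.filter_true_of_mem
    intro i _
    exact i.isLt
  refine ⟨hmain, ?_⟩
  rw [hmain]
  have hou : orderOf g = q - 1 := by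
    rw [orderOf_eq_card_of_forall_mem_zpowers hg, Nat.card_eq_fintype_card, Fintype.card_units,
      hcard]
  have hprod : (∏ i, a i) = g ^ (∑ i, h i) := by
    simp_rw [hah]
    rw [Finset.prod_pow_eq_pow_sum]
  rw [hprod]
  constructor
  · intro h1
    have hS : Even (∑ i, h i) := by
      by_contra hodd'
      rw [Nat.not_even_iff_odd] at hodd'
      rw [hodd'.neg_one_pow] at h1
      exact (by decide : ¬((-1 : ℤˣ) = 1)) h1
    obtain ⟨k, hk⟩ := hS
    exact ⟨g ^ k, by rw [hk, pow_add]⟩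
  · intro hsq
    suffices hS : Even (∑ i, h i) by rw [hS.neg_one_pow]
    obtain ⟨b, hb⟩ := hsq
    obtain ⟨m, hm⟩ := Subgroup.mem_zpowers_iff.mp (hg b)
    have h2 : (g : Fˣ) ^ (2 * m) = (g : Fˣ) ^ ((∑ i, h i : ℕ) : ℤ) := by
      rw [two_mul, zpow_add, hm, ← hb, zpow_natCast]
    have hz : (g : Fˣ) ^ (((∑ i, h i : ℕ) : ℤ) - 2 * m) = 1 := by
      rw [zpow_sub, h2]
      exact mul_inv_cancel _
    have hdvd : ((q - 1 : ℕ) : ℤ) ∣ (((∑ i, h i : ℕ) : ℤ) - 2 * m) := by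
      rw [← hou]
      exact orderOf_dvd_iff_zpow_eq_one.mpr hz
    obtain ⟨t, ht⟩ := hdvd
    have hqe : Even ((q - 1 : ℕ) : ℤ) := by
      have : Even (q - 1) := Nat.Odd.sub_odd hq odd_one
      exact (Int.even_coe_nat _).mpr this
    obtain ⟨ev, he⟩ := hqe
    have hZ : Even ((∑ i, h i : ℕ) : ℤ) :=
      ⟨m + ev * t, by linear_combination ht + t * he⟩
    exact (Int.even_coe_nat _).mp hZ
end

section
/- Let q = 2^m with m ≥ 2 and n ≥ 1. Every triangular automorphism J(x_1,...,x_n) = (a_1 x_1 + f_1(x_2,...,x_n), ..., a_n x_n + f_n) with a_i ∈ F_q^* induces an even permutation of F_q^n. -/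
open Equiv Equiv.Perm

private lemma int_units_eq_one_of_odd_pow {u : ℤˣ} {k : ℕ} (hk : Odd k) (h : u ^ k = 1) :
    u = 1 := by
  obtain ⟨j, rfl⟩ := hk
  rwa [pow_add, pow_one, pow_mul, sq, Int.units_mul_self, one_pow, one_mul] at h

private lemma sign_mulLeft₀ {F : Type} [Field F] [Fintype F] [DecidableEq F]
    (hodd : Odd (Fintype.card F - 1)) (a : F) (ha : a ≠ 0) :
    Equiv.Perm.sign (Equiv.mulLeft₀ a ha) = 1 := by
  have hpow : ∀ (k : ℕ) (y : F), ((Equiv.mulLeft₀ a ha) ^ k) y = a ^ k * y := by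
    intro k
    induction k with
    | zero => intro y; simp
    | succ k ih =>
      intro y
      rw [pow_succ, Equiv.Perm.mul_apply, Equiv.mulLeft₀_apply, ih, pow_succ]
      ring
  have h1 : (Equiv.mulLeft₀ a ha) ^ (Fintype.card F - 1) = 1 := by
    ext y
    rw [hpow, FiniteField.pow_card_sub_one_eq_one a ha, one_mul, Equiv.Perm.one_apply]
  apply int_units_eq_one_of_odd_pow hodd
  rw [← map_pow, h1, map_one]

private lemma sign_addLeft_mul {F : Type} [Field F] [Fintype F] [DecidableEq F]
    (a c : F) (ha : a ≠ 0) :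
    Equiv.Perm.sign (Equiv.addLeft (a * c) : Equiv.Perm F) =
      Equiv.Perm.sign (Equiv.addLeft c : Equiv.Perm F) := by
  have key : (Equiv.addLeft (a * c) : Equiv.Perm F) * Equiv.mulLeft₀ a ha =
      Equiv.mulLeft₀ a ha * Equiv.addLeft c := by
    ext x
    simp only [Equiv.Perm.mul_apply, Equiv.mulLeft₀_apply, Equiv.coe_addLeft]
    ring
  have := congrArg Equiv.Perm.sign key
  rw [map_mul, map_mul] at this
  exact mul_right_cancel (this.trans (mul_comm _ _))

private lemma sign_addLeft {F : Type} [Field F] [Fintype F] [DecidableEq F]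
    (h4 : 3 < Fintype.card F) (c : F) :
    Equiv.Perm.sign (Equiv.addLeft c : Equiv.Perm F) = 1 := by
  have tadd : ∀ u v : F, Equiv.Perm.sign (Equiv.addLeft (u + v) : Equiv.Perm F) =
      Equiv.Perm.sign (Equiv.addLeft u : Equiv.Perm F) *
        Equiv.Perm.sign (Equiv.addLeft v : Equiv.Perm F) := by
    intro u v
    have : (Equiv.addLeft (u + v) : Equiv.Perm F) = Equiv.addLeft u * Equiv.addLeft v := by
      ext x
      simp [Equiv.Perm.mul_apply, add_assoc]
    rw [this, map_mul]
  have hex : ∃ a : F, a ∉ ({0, 1, -1} : Finset F) := by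
    by_contra h
    push_neg at h
    have hsub : (Finset.univ : Finset F) ⊆ {0, 1, -1} := fun x _ => h x
    have h1 := Finset.card_le_card hsub
    have h2 : ({0, 1, -1} : Finset F).card ≤ 3 := by
      refine le_trans (Finset.card_insert_le _ _) ?_
      refine le_trans (Nat.add_le_add_right (Finset.card_insert_le _ _) 1) ?_
      simp
    rw [Finset.card_univ] at h1
    omega
  obtain ⟨a, haS⟩ := hex
  simp only [Finset.mem_insert, Finset.mem_singleton, not_or] at haS
  obtain ⟨ha0, ha1, ham⟩ := haS
  have hA1 : a + 1 ≠ 0 := fun h => ham (by linear_combination h)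
  have e1 : Equiv.Perm.sign (Equiv.addLeft ((a + 1) * c) : Equiv.Perm F) =
      Equiv.Perm.sign (Equiv.addLeft c : Equiv.Perm F) := sign_addLeft_mul (a + 1) c hA1
  have e2 : Equiv.Perm.sign (Equiv.addLeft ((a + 1) * c) : Equiv.Perm F) =
      Equiv.Perm.sign (Equiv.addLeft c : Equiv.Perm F) *
        Equiv.Perm.sign (Equiv.addLeft c : Equiv.Perm F) := by
    rw [add_mul, one_mul, tadd, sign_addLeft_mul a c ha0]
  have := e1.symm.trans e2
  calc Equiv.Perm.sign (Equiv.addLeft c : Equiv.Perm F) = _ := this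
  _ = 1 := Int.units_mul_self _

private lemma sign_affine {F : Type} [Field F] [Fintype F] [DecidableEq F]
    (hodd : Odd (Fintype.card F - 1)) (h4 : 3 < Fintype.card F)
    (π : Equiv.Perm F) (a c : F) (ha : a ≠ 0) (h : ∀ y, π y = a * y + c) :
    Equiv.Perm.sign π = 1 := by
  have : π = (Equiv.addLeft c : Equiv.Perm F) * Equiv.mulLeft₀ a ha := by
    ext y
    rw [h y, Equiv.Perm.mul_apply, Equiv.mulLeft₀_apply, Equiv.coe_addLeft, add_comm]
  rw [this, map_mul, sign_addLeft h4, sign_mulLeft₀ hodd, mul_one]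

/-- cons equivalence -/
private def consEquiv (F : Type) (n : ℕ) : (Fin (n + 1) → F) ≃ F × (Fin n → F) where
  toFun x := (x 0, Fin.tail x)
  invFun p := Fin.cons p.1 p.2
  left_inv x := Fin.cons_self_tail x
  right_inv p := by simp

private lemma tri (F : Type) [Fintype F] [DecidableEq F] [Nonempty F] :
    ∀ (n : ℕ) (g : ∀ i : Fin n, ({j : Fin n // i < j} → F) → Equiv.Perm F),
      (∀ i c, Equiv.Perm.sign (g i c) = 1) →
      ∀ σ : Equiv.Perm (Fin n → F),
        (∀ x i, σ x i = g i (fun j => x j.1) (x i)) →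
        Equiv.Perm.sign σ = 1 := by
  intro n
  induction n with
  | zero =>
    intro g hg σ hσ
    have : σ = 1 := Equiv.ext fun x => funext fun i => i.elim0
    rw [this, map_one]
  | succ n ih =>
    intro g hg σ hσ
    -- the coordinate-0 permutation family
    let G0 : (Fin n → F) → Equiv.Perm F := fun t =>
      g 0 (fun j => t (j.1.pred (Fin.pos_iff_ne_zero.mp j.2)))
    let e := consEquiv F n
    let τ : Equiv.Perm (Fin (n + 1) → F) := Equiv.permCongr e.symm (Equiv.prodCongrLeft G0)
    have hkey : ∀ (z : F) (t : Fin n → F) (k : Fin (n + 1)) (hk : k ≠ 0),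
        (Fin.cons z t : Fin (n + 1) → F) k = t (k.pred hk) := by
      intro z t k hk
      conv_lhs => rw [← Fin.succ_pred k hk]
      rw [Fin.cons_succ]
    have hτ : ∀ x, τ x = Fin.cons (G0 (Fin.tail x) (x 0)) (Fin.tail x) := by
      intro x
      show e.symm (Equiv.prodCongrLeft G0 (e x)) = _
      rfl
    have hsτ : Equiv.Perm.sign τ = 1 := by
      show Equiv.Perm.sign (Equiv.permCongr e.symm (Equiv.prodCongrLeft G0)) = 1
      rw [Equiv.Perm.sign_permCongr, Equiv.Perm.sign_prodCongrLeft]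
      exact Finset.prod_eq_one fun t _ => hg _ _
    have hτinv : ∀ x, τ⁻¹ x = Fin.cons ((G0 (Fin.tail x))⁻¹ (x 0)) (Fin.tail x) := by
      intro x
      apply τ.injective
      rw [Equiv.Perm.coe_inv, Equiv.apply_symm_apply, hτ, Fin.tail_cons, Fin.cons_zero,
        Equiv.Perm.coe_inv, Equiv.apply_symm_apply, Fin.cons_self_tail]
    set μ : Equiv.Perm (Fin (n + 1) → F) := σ * τ⁻¹ with hμdef
    have hμ0 : ∀ x, μ x 0 = x 0 := by
      intro x
      show σ (τ⁻¹ x) 0 = x 0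
      rw [hσ, hτinv, Fin.cons_zero]
      have harg : (fun j : {j : Fin (n + 1) // 0 < j} =>
          Fin.cons ((G0 (Fin.tail x))⁻¹ (x 0)) (Fin.tail x) j.1)
          = fun j => Fin.tail x (j.1.pred (Fin.pos_iff_ne_zero.mp j.2)) := by
        funext j; exact hkey _ _ _ _
      rw [harg]
      exact Equiv.apply_symm_apply (G0 (Fin.tail x)) (x 0)
    have hμi : ∀ x (i : Fin n),
        μ x i.succ = g i.succ (fun k => x k.1) (x i.succ) := by
      intro x i
      have hA : (fun k : {k : Fin (n + 1) // i.succ < k} => (τ⁻¹ x) k.1)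
          = fun k => x k.1 := by
        funext k
        have hk0 : k.1 ≠ 0 := Fin.pos_iff_ne_zero.mp (lt_trans (Fin.succ_pos i) k.2)
        rw [hτinv, hkey _ _ _ hk0]
        show x ((k.1.pred hk0).succ) = x k.1
        rw [Fin.succ_pred]
      have hB : (τ⁻¹ x) i.succ = x i.succ := by
        rw [hτinv, Fin.cons_succ]
        rfl
      show σ (τ⁻¹ x) i.succ = _
      rw [hσ, hA, hB]
    obtain ⟨d⟩ := (inferInstance : Nonempty F)
    have hμinv0 : ∀ x, μ⁻¹ x 0 = x 0 := by
      intro x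
      have h := hμ0 (μ⁻¹ x)
      rw [Equiv.Perm.coe_inv, Equiv.apply_symm_apply] at h
      exact h.symm
    have hconsμ : ∀ t, Fin.cons d (Fin.tail (μ (Fin.cons d t))) = μ (Fin.cons d t) := by
      intro t
      funext j
      refine Fin.cases ?_ (fun i => ?_) j
      · rw [Fin.cons_zero, hμ0, Fin.cons_zero]
      · rw [Fin.cons_succ]; rfl
    have hconsμinv : ∀ t, Fin.cons d (Fin.tail (μ⁻¹ (Fin.cons d t))) = μ⁻¹ (Fin.cons d t) := by
      intro t
      funext j
      refine Fin.cases ?_ (fun i => ?_) j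
      · rw [Fin.cons_zero, hμinv0, Fin.cons_zero]
      · rw [Fin.cons_succ]; rfl
    let ν : Equiv.Perm (Fin n → F) :=
      { toFun := fun t => Fin.tail (μ (Fin.cons d t))
        invFun := fun t => Fin.tail (μ⁻¹ (Fin.cons d t))
        left_inv := by
          intro t
          show Fin.tail (μ⁻¹ (Fin.cons d (Fin.tail (μ (Fin.cons d t))))) = t
          rw [hconsμ, Equiv.Perm.coe_inv, Equiv.symm_apply_apply, Fin.tail_cons]
        right_inv := by
          intro t
          show Fin.tail (μ (Fin.cons d (Fin.tail (μ⁻¹ (Fin.cons d t))))) = t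
          rw [hconsμinv, Equiv.Perm.coe_inv, Equiv.apply_symm_apply, Fin.tail_cons] }
    have hν : ∀ t, ν t = Fin.tail (μ (Fin.cons d t)) := fun t => rfl
    have hsν : Equiv.Perm.sign ν = 1 := by
      refine ih (fun i c => g i.succ (fun k =>
          c ⟨k.1.pred (Fin.pos_iff_ne_zero.mp (lt_trans (Fin.succ_pos i) k.2)), by
            have hk := k.2
            rw [Fin.lt_def] at hk ⊢
            rw [Fin.coe_pred]
            rw [Fin.val_succ] at hk
            omega⟩)) (fun i c => hg _ _) ν ?_
      intro t i
      have e1 : ν t i = g i.succ (fun k => (Fin.cons d t : Fin (n + 1) → F) k.1)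
          ((Fin.cons d t : Fin (n + 1) → F) i.succ) := by
        rw [hν]
        show μ (Fin.cons d t) i.succ = _
        rw [hμi]
      have harg : (fun k : {k : Fin (n + 1) // i.succ < k} =>
            (Fin.cons d t : Fin (n + 1) → F) k.1)
          = fun k => t (k.1.pred (Fin.pos_iff_ne_zero.mp (lt_trans (Fin.succ_pos i) k.2))) := by
        funext k
        exact hkey _ _ _ _
      rw [e1, Fin.cons_succ, harg]
    have hμeq : μ = Equiv.permCongr e.symm (Equiv.prodCongrRight fun _ : F => ν) := by
      apply Equiv.ext
      intro x
      have hrhs : Equiv.permCongr e.symm (Equiv.prodCongrRight fun _ : F => ν) x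
          = Fin.cons (x 0) (ν (Fin.tail x)) := rfl
      rw [hrhs]
      funext j
      refine Fin.cases ?_ (fun i => ?_) j
      · rw [Fin.cons_zero, hμ0]
      · rw [Fin.cons_succ, hν]
        show μ x i.succ = μ (Fin.cons d (Fin.tail x)) i.succ
        rw [hμi, hμi]
        have harg : (fun k : {k : Fin (n + 1) // i.succ < k} =>
              (Fin.cons d (Fin.tail x) : Fin (n + 1) → F) k.1)
            = fun k => x k.1 := by
          funext k
          have hk0 : k.1 ≠ 0 := Fin.pos_iff_ne_zero.mp (lt_trans (Fin.succ_pos i) k.2)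
          rw [hkey _ _ _ hk0]
          show x ((k.1.pred hk0).succ) = x k.1
          rw [Fin.succ_pred]
        rw [harg, Fin.cons_succ]
        rfl
    have hsμ : Equiv.Perm.sign μ = 1 := by
      rw [hμeq, Equiv.Perm.sign_permCongr, Equiv.Perm.sign_prodCongrRight]
      exact Finset.prod_eq_one fun _ _ => hsν
    have hcomp : σ = μ * τ := (inv_mul_cancel_right σ τ).symm
    rw [hcomp, map_mul, hsμ, hsτ, mul_one]

/-- For `q = 2^m`, `m ≥ 2`, every triangular automorphism
`J(x)_i = a_i x_i + f_i(x_{i+1},…,x_n)` with `a_i ∈ F_q^*` induces an even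
permutation of `F_q^n`. -/
theorem stmt15 (m n : ℕ) (hm : 2 ≤ m) (hn : 1 ≤ n)
    (F : Type) [Field F] [Fintype F] [DecidableEq F]
    (hcard : Fintype.card F = 2 ^ m)
    (a : Fin n → Fˣ)
    (f : ∀ i : Fin n, MvPolynomial {j : Fin n // i < j} F)
    (σ : Equiv.Perm (Fin n → F))
    (hσ : ∀ x i, σ x i = (a i : F) * x i + MvPolynomial.eval (fun j => x j.1) (f i)) :
    Equiv.Perm.sign σ = 1 := by
  have h4 : 3 < Fintype.card F := by
    have : 2 ^ 2 ≤ 2 ^ m := Nat.pow_le_pow_right (by norm_num) hm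
    omega
  have hodd : Odd (Fintype.card F - 1) := by
    rw [hcard]
    refine Nat.Even.sub_odd Nat.one_le_two_pow ?_ odd_one
    exact (Nat.even_pow).2 ⟨even_two, by omega⟩
  haveI : Nonempty F := ⟨0⟩
  refine tri F n
    (fun i c => (Equiv.addLeft (MvPolynomial.eval c (f i)) : Equiv.Perm F) *
      Equiv.mulLeft₀ (a i : F) (a i).ne_zero) ?_ σ ?_
  · intro i c
    rw [map_mul, sign_addLeft h4, sign_mulLeft₀ hodd, mul_one]
  · intro x i
    rw [hσ, Equiv.Perm.mul_apply, Equiv.mulLeft₀_apply, Equiv.coe_addLeft, add_comm]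
end

section
/- Let q = 2 and n ≥ 1. Let J be the triangular automorphism of F_2^n given by J(x_1,...,x_n) = (x_1 + f_1(x_2,...,x_n), x_2 + f_2(x_3,...,x_n), ..., x_n + f_n). Then sgn(J) = (-1)^{M}, where M is the number of monomials of f_1 in which every variable X_2,...,X_n appears with exponent ≥ 1. In particular, J is odd if and only if M is odd. -/
open Finset

private lemma zmod2_cancel : ∀ t a : ZMod 2, t + (t + a) = a := by decide
private lemma zmod2_cancel' : ∀ t a : ZMod 2, t + a + t = a := by decide
private lemma zmod2_ne_zero : ∀ t : ZMod 2, t ≠ 0 → t = 1 := by decide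

private lemma sign_addLeft_s16 (t : ZMod 2) :
    Equiv.Perm.sign (Equiv.addLeft t) = if t = 1 then -1 else 1 := by
  revert t; decide

/-- Abstract sign lemma. -/
private lemma aux_sign {β : Type*} [Fintype β] [DecidableEq β]
    (π : Equiv.Perm (ZMod 2 × β)) (c : β → ZMod 2) (h : β → β)
    (hπ : ∀ a y, π (a, y) = (a + c y, h y)) :
    Equiv.Perm.sign π = (-1) ^ (Finset.univ.filter (fun y => c y = 1)).card := by
  classical
  set T : Equiv.Perm (ZMod 2 × β) :=
    Equiv.prodCongrLeft (fun y => Equiv.addLeft (c y)) with hT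
  have hTapp : ∀ a y, T (a, y) = (c y + a, y) := fun a y => rfl
  set ρ : Equiv.Perm (ZMod 2 × β) := π * T⁻¹ with hρ
  have hTinv : ∀ a y, T⁻¹ (a, y) = (c y + a, y) := by
    intro a y
    have : T (c y + a, y) = (a, y) := by rw [hTapp, zmod2_cancel]
    rw [← this]; simp
  have hρapp : ∀ a y, ρ (a, y) = (a, h y) := by
    intro a y
    rw [hρ, Equiv.Perm.mul_apply, hTinv, hπ, zmod2_cancel']
  have hinj : Function.Injective h := by
    intro y y' hyy
    have : ρ (0, y) = ρ (0, y') := by rw [hρapp, hρapp, hyy]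
    have := ρ.injective this
    simpa using this
  set h' : Equiv.Perm β := Equiv.ofBijective h (Finite.injective_iff_bijective.mp hinj) with hh'
  have hρeq : ρ = Equiv.prodCongrRight (fun _ => h') := by
    apply Equiv.ext
    rintro ⟨a, y⟩
    rw [hρapp]
    simp [Equiv.prodCongrRight, hh', Equiv.ofBijective]
  have hsρ : Equiv.Perm.sign ρ = 1 := by
    rw [hρeq, Equiv.Perm.sign_prodCongrRight]
    rw [Finset.prod_const]
    have : Fintype.card (ZMod 2) = 2 := rfl
    rw [Finset.card_univ, this, Int.units_sq]
  have hπeq : π = ρ * T := by rw [hρ]; group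
  rw [hπeq, map_mul, hsρ, one_mul]
  rw [hT, Equiv.Perm.sign_prodCongrLeft]
  calc (∏ y : β, Equiv.Perm.sign (Equiv.addLeft (c y)))
      = ∏ y : β, (if c y = 1 then (-1 : ℤˣ) else 1) := by
        exact Finset.prod_congr rfl fun y _ => sign_addLeft_s16 (c y)
    _ = (-1) ^ (Finset.univ.filter (fun y => c y = 1)).card := by
        rw [Finset.prod_ite, Finset.prod_const, Finset.prod_const, one_pow, mul_one]

/-- Sum of evaluations over all points equals the number of "full" monomials, in ZMod 2. -/
private lemma aux_sum {ι : Type*} [Fintype ι] [DecidableEq ι]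
    (p : MvPolynomial ι (ZMod 2)) :
    ∑ y : ι → ZMod 2, MvPolynomial.eval y p
      = ((p.support.filter (fun s => ∀ j, 1 ≤ s j)).card : ZMod 2) := by
  classical
  have key : ∀ e : ℕ, (∑ t : ZMod 2, t ^ e) = if e = 0 then 0 else 1 := by
    intro e
    cases e with
    | zero => decide
    | succ e =>
      have huniv : (Finset.univ : Finset (ZMod 2)) = {0, 1} := by decide
      rw [if_neg (Nat.succ_ne_zero e), huniv,
        Finset.sum_pair (by decide : (0 : ZMod 2) ≠ 1),
        zero_pow (Nat.succ_ne_zero e), one_pow, zero_add]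
  simp_rw [MvPolynomial.eval_eq']
  rw [Finset.sum_comm]
  calc ∑ d ∈ p.support, ∑ y : ι → ZMod 2, p.coeff d * ∏ i, y i ^ d i
      = ∑ d ∈ p.support, p.coeff d * ∑ y : ι → ZMod 2, ∏ i, y i ^ d i := by
        simp_rw [Finset.mul_sum]
    _ = ∑ d ∈ p.support, p.coeff d * ∏ i, ∑ t : ZMod 2, t ^ d i := by
        refine Finset.sum_congr rfl fun d _ => ?_
        rw [← Fintype.piFinset_univ,
          Finset.sum_prod_piFinset (Finset.univ : Finset (ZMod 2)) (fun i t => t ^ d i)]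
    _ = ∑ d ∈ p.support, p.coeff d * (if ∀ i, 1 ≤ d i then 1 else 0) := by
        refine Finset.sum_congr rfl fun d _ => ?_
        congr 1
        calc (∏ i, ∑ t : ZMod 2, t ^ d i)
            = ∏ i, (if 1 ≤ d i then (1 : ZMod 2) else 0) := by
              refine Finset.prod_congr rfl fun i _ => ?_
              rw [key (d i)]
              rcases Nat.eq_zero_or_pos (d i) with h | h
              · rw [if_pos h, if_neg (by omega)]
              · rw [if_neg (by omega), if_pos (by omega : 1 ≤ d i)]
          _ = if ∀ i, 1 ≤ d i then 1 else 0 := Fintype.prod_boole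
    _ = ∑ d ∈ p.support.filter (fun s => ∀ j, 1 ≤ s j), p.coeff d := by
        rw [Finset.sum_filter]
        refine Finset.sum_congr rfl fun d _ => ?_
        split <;> simp
    _ = ∑ _d ∈ p.support.filter (fun s => ∀ j, 1 ≤ s j), (1 : ZMod 2) := by
        refine Finset.sum_congr rfl fun d hd => ?_
        have hd' : p.coeff d ≠ 0 := MvPolynomial.mem_support_iff.mp (Finset.mem_filter.mp hd).1
        exact zmod2_ne_zero _ hd'
    _ = _ := by rw [Finset.sum_const, nsmul_eq_mul, mul_one]

/-- The splитting equivalence. -/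
private def splitE (n : ℕ) (hn : 1 ≤ n) :
    (Fin n → ZMod 2) ≃ ZMod 2 × ({j : Fin n // (⟨0, hn⟩ : Fin n) < j} → ZMod 2) where
  toFun x := (x ⟨0, hn⟩, fun j => x j.1)
  invFun p i := if h : (⟨0, hn⟩ : Fin n) < i then p.2 ⟨i, h⟩ else p.1
  left_inv x := by
    funext i
    dsimp only
    split
    · rfl
    · rename_i hlt
      have hle : i.val ≤ (⟨0, hn⟩ : Fin n).val := Fin.le_def.mp (not_lt.mp hlt)
      have h0 : ((⟨0, hn⟩ : Fin n)).val = 0 := rfl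
      have : i = ⟨0, hn⟩ := Fin.ext (by omega)
      rw [this]
  right_inv p := by
    ext
    · simp
    · rename_i j
      simp [j.2]

/-- Over `F_2`, the strictly triangular automorphism
`J(x)_i = x_i + f_i(x_{i+1},…,x_n)` has sign `(-1)^M`, where `M` is the number
of monomials of `f_1` in which every variable `X_2,…,X_n` appears with
exponent `≥ 1`; in particular `J` is odd iff `M` is odd. -/
theorem stmt16 (n : ℕ) (hn : 1 ≤ n)
    (f : ∀ i : Fin n, MvPolynomial {j : Fin n // i < j} (ZMod 2))
    (σ : Equiv.Perm (Fin n → ZMod 2))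
    (hσ : ∀ x i, σ x i = x i + MvPolynomial.eval (fun j => x j.1) (f i))
    (M : ℕ)
    (hM : M = ((f ⟨0, hn⟩).support.filter
      (fun s => ∀ j : {j : Fin n // (⟨0, hn⟩ : Fin n) < j}, 1 ≤ s j)).card) :
    Equiv.Perm.sign σ = (-1) ^ M ∧
      (Equiv.Perm.sign σ = -1 ↔ Odd M) := by
  classical
  set E := splitE n hn with hE
  set c : ({j : Fin n // (⟨0, hn⟩ : Fin n) < j} → ZMod 2) → ZMod 2 :=
    fun y => MvPolynomial.eval y (f ⟨0, hn⟩) with hc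
  set h : ({j : Fin n // (⟨0, hn⟩ : Fin n) < j} → ZMod 2) →
      ({j : Fin n // (⟨0, hn⟩ : Fin n) < j} → ZMod 2) :=
    fun y j => y j +
      MvPolynomial.eval (fun k => y ⟨k.1, lt_trans j.2 k.2⟩) (f j.1) with hh
  have hπ : ∀ a y, (E.permCongr σ) (a, y) = (a + c y, h y) := by
    intro a y
    rw [Equiv.permCongr_apply]
    set x := E.symm (a, y) with hx
    have hx0 : x ⟨0, hn⟩ = a := by
      rw [hx, hE]; simp [splitE]
    have hxj : ∀ (j : Fin n) (hj : (⟨0, hn⟩ : Fin n) < j), x j = y ⟨j, hj⟩ := by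
      intro j hj
      rw [hx, hE]; simp [splitE, hj]
    show (σ x ⟨0, hn⟩, fun j => σ x j.1) = (a + c y, h y)
    refine Prod.ext ?_ ?_
    · show σ x ⟨0, hn⟩ = a + c y
      rw [hσ, hx0, hc]
      have hfun : (fun j : {j : Fin n // (⟨0, hn⟩ : Fin n) < j} => x j.1) = y :=
        funext fun j => hxj j.1 j.2
      rw [hfun]
    · show (fun j => σ x j.1) = h y
      funext j
      rw [hσ, hh]
      dsimp only
      rw [hxj j.1 j.2]
      have hfun : (fun k : {k : Fin n // (j : Fin n) < k} => x k.1)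
          = fun k => y ⟨k.1, lt_trans j.2 k.2⟩ :=
        funext fun k => hxj k.1 (lt_trans j.2 k.2)
      rw [hfun]
  have hsign : Equiv.Perm.sign σ
      = (-1) ^ (Finset.univ.filter (fun y => c y = 1)).card := by
    have := aux_sign (E.permCongr σ) c h hπ
    rwa [Equiv.Perm.sign_permCongr] at this
  set N := (Finset.univ.filter (fun y => c y = 1)).card with hN
  have hsum : (∑ y, c y) = (N : ZMod 2) := by
    rw [← Finset.sum_filter_of_ne (p := fun y => c y = 1)
      (fun y _ hy => zmod2_ne_zero _ hy)]
    rw [Finset.sum_congr rfl (fun y hy => (Finset.mem_filter.mp hy).2), Finset.sum_const,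
      nsmul_eq_mul, mul_one]
  have hsumM : (∑ y, c y) = (M : ZMod 2) := by
    rw [hc]
    rw [aux_sum (f ⟨0, hn⟩), hM]
  have hNM : N % 2 = M % 2 :=
    (ZMod.natCast_eq_natCast_iff' N M 2).mp (by rw [← hsum, hsumM])
  have hpow : ((-1 : ℤˣ)) ^ N = (-1) ^ M := by
    rcases Nat.even_or_odd N with he | ho
    · have hm : Even M := by
        rw [Nat.even_iff] at *; omega
      rw [he.neg_one_pow, hm.neg_one_pow]
    · have hm : Odd M := by
        rw [Nat.odd_iff] at *; omega
      rw [ho.neg_one_pow, hm.neg_one_pow]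
  have main : Equiv.Perm.sign σ = (-1) ^ M := hsign.trans hpow
  refine ⟨main, ?_⟩
  rw [main]
  constructor
  · intro hm
    by_contra hodd
    rw [Nat.not_odd_iff_even] at hodd
    rw [hodd.neg_one_pow] at hm
    exact absurd hm (by decide)
  · exact fun hm => hm.neg_one_pow
end

section
/- Let q be a prime power with q odd or q = 2^m, m ≥ 2, and let n ≥ 1. Every strictly triangular automorphism of F_q^n, J(x_1,...,x_n) = (x_1 + f_1(x_2,...,x_n), ..., x_{n-1} + f_{n-1}(x_n), x_n + f_n) with f_i ∈ F_q[X_{i+1},...,X_n] and f_n ∈ F_q, induces an even permutation of F_q^n. -/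
open Equiv Equiv.Perm

-- sign of translation on a finite field with more than 2 elements
theorem sign_addLeft_eq_one {F : Type} [Field F] [Fintype F] [DecidableEq F]
    (hF : 2 < Fintype.card F) (c : F) : Equiv.Perm.sign (Equiv.addLeft c) = 1 := by
  -- additivity
  have hadd : ∀ a b : F, (Equiv.addLeft (a + b) : Perm F) =
      Equiv.addLeft a * Equiv.addLeft b := by
    intro a b; ext x; simp [add_assoc]
  -- scaling invariance
  have hscale : ∀ (u d : F), u ≠ 0 →
      Equiv.Perm.sign (Equiv.addLeft (u * d)) = Equiv.Perm.sign (Equiv.addLeft d) := by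
    intro u d hu
    have h : (Equiv.addLeft (u * d) : Perm F) =
        (Equiv.mulLeft₀ u hu).permCongr (Equiv.addLeft d) := by
      ext x
      simp [Equiv.permCongr_apply, Equiv.mulLeft₀, mul_add, Equiv.Perm.inv_def, Equiv.mulLeft_symm, Units.smul_def, mul_inv_cancel_left₀ hu]
    rw [h, Equiv.Perm.sign_permCongr]
  rcases eq_or_ne c 0 with rfl | hc
  · simp
  -- all nonzero translations have the same sign s
  have hconst : ∀ d : F, d ≠ 0 →
      Equiv.Perm.sign (Equiv.addLeft d) = Equiv.Perm.sign (Equiv.addLeft c) := by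
    intro d hd
    have : d = d * c⁻¹ * c := by field_simp
    rw [this, hscale _ _ (by
      intro h
      exact hd (by simpa [hc] using congrArg (· * c) h))]
  -- pick a ∉ {0, c}
  have : ∃ a : F, a ≠ 0 ∧ a ≠ c := by
    by_contra h
    push_neg at h
    have hsub : (Finset.univ : Finset F) ⊆ {0, c} := by
      intro a _
      rcases eq_or_ne a 0 with rfl | ha
      · simp
      · simp [h a ha]
    have h1 := Finset.card_le_card hsub
    have h2 : ({0, c} : Finset F).card ≤ 2 :=
      (Finset.card_insert_le _ _).trans (by simp)
    rw [Finset.card_univ] at h1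
    omega
  obtain ⟨a, ha0, hac⟩ := this
  have hb : c - a ≠ 0 := sub_ne_zero.mpr (Ne.symm hac)
  have key : Equiv.Perm.sign (Equiv.addLeft c)
      = Equiv.Perm.sign (Equiv.addLeft c) * Equiv.Perm.sign (Equiv.addLeft c) := by
    conv_lhs => rw [show c = a + (c - a) by ring, hadd, map_mul,
      hconst a ha0, hconst _ hb]
  -- s = s * s with s a unit of ℤ implies s = 1
  have h2 : Equiv.Perm.sign (Equiv.addLeft c) * Equiv.Perm.sign (Equiv.addLeft c) = 1 :=
    Int.units_mul_self _
  rw [key, h2]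

variable {n : ℕ} {F : Type} [Field F] [Fintype F] [DecidableEq F]

private lemma update_comp_aux (K : Fin n) (x : Fin n → F) (v : F) :
    (fun j : {j : Fin n // j ≠ K} => Function.update x K v j.1) = fun j => x j.1 :=
  funext fun j => Function.update_of_ne j.2 _ _

/-- Elementary permutation adding to coordinate `K` a function of the other coordinates. -/
def elemPerm (K : Fin n) (g : ({j : Fin n // j ≠ K} → F) → F) : Equiv.Perm (Fin n → F) where
  toFun x := Function.update x K (x K + g fun j => x j.1)
  invFun x := Function.update x K (x K - g fun j => x j.1)
  left_inv x := by
    funext j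
    rcases eq_or_ne j K with rfl | hj
    · simp [update_comp_aux]
    · simp [Function.update_of_ne hj]
  right_inv x := by
    funext j
    rcases eq_or_ne j K with rfl | hj
    · simp [update_comp_aux]
    · simp [Function.update_of_ne hj]

lemma elemPerm_apply (K : Fin n) (g : ({j : Fin n // j ≠ K} → F) → F) (x : Fin n → F) :
    elemPerm K g x = Function.update x K (x K + g fun j => x j.1) := rfl

lemma elemPerm_inv_apply (K : Fin n) (g : ({j : Fin n // j ≠ K} → F) → F) (x : Fin n → F) :
    (elemPerm K g)⁻¹ x = Function.update x K (x K - g fun j => x j.1) := rfl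

theorem sign_elemPerm (hF : 2 < Fintype.card F) (K : Fin n)
    (g : ({j : Fin n // j ≠ K} → F) → F) : Equiv.Perm.sign (elemPerm K g) = 1 := by
  have h : elemPerm K g = (Equiv.funSplitAt K F).symm.permCongr
      (Equiv.prodCongrLeft fun a : {j : Fin n // j ≠ K} → F => Equiv.addLeft (g a)) := by
    refine Equiv.ext fun x => funext fun j => ?_
    rcases eq_or_ne j K with rfl | hj
    · simp [elemPerm_apply, Equiv.permCongr_apply, Equiv.prodCongrLeft_apply, add_comm]
    · simp [elemPerm_apply, Equiv.permCongr_apply, Equiv.prodCongrLeft_apply,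
        Function.update_of_ne hj, hj]
  rw [h, Equiv.Perm.sign_permCongr, Equiv.Perm.sign_prodCongrLeft]
  simp [sign_addLeft_eq_one hF]

theorem aux_ind (hF : 2 < Fintype.card F)
    (f : ∀ i : Fin n, MvPolynomial {j : Fin n // i < j} F) :
    ∀ (m k : ℕ), n ≤ k + m → ∀ σ : Equiv.Perm (Fin n → F),
      (∀ x i, σ x i = x i +
        (if k ≤ (i : ℕ) then MvPolynomial.eval (fun j => x j.1) (f i) else 0)) →
      Equiv.Perm.sign σ = 1 := by
  intro m
  induction m with
  | zero =>
    intro k hk σ hσ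
    have hσ1 : σ = 1 := by
      ext x i
      rw [hσ x i, if_neg (by omega : ¬ k ≤ (i : ℕ)), add_zero]
      rfl
    rw [hσ1, map_one]
  | succ m ih =>
    intro k hk σ hσ
    by_cases h : n ≤ k + m
    · exact ih k h σ hσ
    · have hkn : k < n := by omega
      set K : Fin n := ⟨k, hkn⟩ with hK
      set g : ({j : Fin n // j ≠ K} → F) → F := fun a =>
        MvPolynomial.eval (fun j : {j : Fin n // K < j} => a ⟨j.1, j.2.ne'⟩) (f K) with hg
      set E := elemPerm K g with hE
      have hσ' : ∀ x i, (σ * E⁻¹) x i = x i +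
          (if k + 1 ≤ (i : ℕ) then MvPolynomial.eval (fun j => x j.1) (f i) else 0) := by
        intro x i
        have hmul : (σ * E⁻¹) x = σ (E⁻¹ x) := rfl
        rw [hmul, hE, elemPerm_inv_apply, hσ]
        set y : Fin n → F := Function.update x K (x K - g fun j => x j.1) with hy
        rcases lt_trichotomy (i : ℕ) k with hik | hik | hik
        · rw [if_neg (by omega), if_neg (by omega), add_zero, add_zero]
          exact Function.update_of_ne (by simp [hK, Fin.ext_iff]; omega) _ _
        · have hiK : i = K := Fin.ext hik
          subst hiK
          rw [if_pos (by omega), if_neg (by omega), add_zero]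
          have h1 : y K = x K - g fun j => x j.1 := Function.update_self _ _ _
          have h2 : (fun j : {j : Fin n // K < j} => y j.1) = fun j => x j.1 :=
            funext fun j => Function.update_of_ne j.2.ne' _ _
          rw [h1, h2, hg]
          ring
        · rw [if_pos (by omega), if_pos (by omega)]
          have hiK : i ≠ K := by simp [hK, Fin.ext_iff]; omega
          have h1 : y i = x i := Function.update_of_ne hiK _ _
          have h2 : (fun j : {j : Fin n // i < j} => y j.1) = fun j => x j.1 :=
            funext fun j => Function.update_of_ne
              (by simp [hK, Fin.ext_iff]; have := j.2; omega) _ _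
          rw [h1, h2]
      have hsig := ih (k + 1) (by omega) (σ * E⁻¹) hσ'
      have hs : σ = (σ * E⁻¹) * E := by group
      rw [hs, map_mul, hsig, hE, sign_elemPerm hF, one_mul]

/-- For `q` odd or `q = 2^m` with `m ≥ 2`, every strictly
triangular automorphism `J(x)_i = x_i + f_i(x_{i+1},…,x_n)` of `F_q^n`
induces an even permutation. -/
theorem stmt17 (q n : ℕ) (hn : 1 ≤ n)
    (hq : Odd q ∨ ∃ m : ℕ, 2 ≤ m ∧ q = 2 ^ m)
    (F : Type) [Field F] [Fintype F] [DecidableEq F] (hcard : Fintype.card F = q)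
    (f : ∀ i : Fin n, MvPolynomial {j : Fin n // i < j} F)
    (σ : Equiv.Perm (Fin n → F))
    (hσ : ∀ x i, σ x i = x i + MvPolynomial.eval (fun j => x j.1) (f i)) :
    Equiv.Perm.sign σ = 1 := by
  have h1 : 1 < Fintype.card F := Fintype.one_lt_card
  have hF : 2 < Fintype.card F := by
    rw [hcard] at h1 ⊢
    rcases hq with ⟨t, ht⟩ | ⟨m, hm, rfl⟩
    · omega
    · have : 2 ^ 2 ≤ 2 ^ m := Nat.pow_le_pow_right (by norm_num) hm
      omega
  exact aux_ind hF f n 0 (by omega) σ fun x i => by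
    rw [hσ x i, if_pos (Nat.zero_le _)]
end

section
/- Let q = 2^m with m ≥ 2 and n ≥ 1. Every tame automorphism of F_q^n — i.e., every element of the subgroup of bijective polynomial maps generated by affine automorphisms and elementary automorphisms — induces an even permutation of F_q^n. -/
open Equiv Function Matrix

/-- sign of an element of odd order. -/
lemma aux_sign_eq_one_of_pow_odd {α : Type*} [DecidableEq α] [Fintype α]
    (σ : Equiv.Perm α) (k : ℕ) (hk : Odd k) (h : σ ^ k = 1) :
    Equiv.Perm.sign σ = 1 := by
  have h1 : (Equiv.Perm.sign σ) ^ k = 1 := by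
    rw [← map_pow, h]; exact Equiv.Perm.sign_one
  rcases Int.units_eq_one_or (Equiv.Perm.sign σ) with h' | h'
  · exact h'
  · rw [h', hk.neg_one_pow] at h1
    exact absurd h1 (by decide)

/-- sign of an involution whose support has cardinality divisible by 4. -/
lemma aux_sign_invol {α : Type*} [DecidableEq α] [Fintype α]
    (σ : Equiv.Perm α) (h2 : σ * σ = 1) (h4 : 4 ∣ σ.support.card) :
    Equiv.Perm.sign σ = 1 := by
  have horder : orderOf σ ∣ 2 := orderOf_dvd_of_pow_eq_one (by rw [pow_two]; exact h2)
  have hcy : ∀ r ∈ σ.cycleType, r = 2 := by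
    intro r hr
    have h1 : 2 ≤ r := Equiv.Perm.two_le_of_mem_cycleType hr
    have h2' : r ∣ 2 := by
      have hd := Multiset.dvd_lcm hr
      rw [σ.lcm_cycleType] at hd
      exact hd.trans horder
    have := Nat.le_of_dvd (by norm_num) h2'
    omega
  have hrep : σ.cycleType = Multiset.replicate (Multiset.card σ.cycleType) 2 :=
    Multiset.eq_replicate_card.2 hcy
  have hsum : σ.cycleType.sum = 2 * Multiset.card σ.cycleType := by
    rw [hrep, Multiset.sum_replicate, Multiset.card_replicate]
    ring_nf
  have hsupp : σ.support.card = 2 * Multiset.card σ.cycleType := by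
    rw [← Equiv.Perm.sum_cycleType, hsum]
  obtain ⟨t, ht⟩ := h4
  have hcardcy : Multiset.card σ.cycleType = 2 * t := by omega
  rw [Equiv.Perm.sign_of_cycleType, hsum, hcardcy]
  have h35 : 2 * (2 * t) + 2 * t = 2 * (3 * t) := by ring
  rw [h35, pow_mul]
  norm_num

section Field

variable {F : Type} [Field F] [Fintype F] [DecidableEq F]

lemma aux_char_two (m : ℕ) (hm : 2 ≤ m) (hcard : Fintype.card F = 2 ^ m) :
    CharP F 2 := by
  have h : ringChar F = 2 := by
    rw [FiniteField.even_card_iff_char_two, hcard]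
    have : (2:ℕ) ∣ 2 ^ m := dvd_pow_self 2 (by omega)
    omega
  exact h ▸ ringChar.charP F

/-- sign of a permutation adding a function of the other coordinates to coordinate `i`. -/
lemma aux_sign_update (m n : ℕ) (hm : 2 ≤ m)
    (hcard : Fintype.card F = 2 ^ m) (i : Fin n)
    (e : ({j : Fin n // j ≠ i} → F) → F) (τ : Equiv.Perm (Fin n → F))
    (hτ : ∀ x, τ x = Function.update x i (x i + e (fun j => x j.1))) :
    Equiv.Perm.sign τ = 1 := by
  haveI := aux_char_two (F := F) m hm hcard
  have hrest : ∀ (x : Fin n → F) (v : F),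
      (fun j : {j : Fin n // j ≠ i} => Function.update x i v j.1)
        = fun j => x j.1 := by
    intro x v
    funext j
    exact Function.update_of_ne j.2 _ _
  have h2 : τ * τ = 1 := by
    ext x
    simp only [Equiv.Perm.mul_apply, Equiv.Perm.one_apply, hτ]
    rw [hrest, Function.update_self, Function.update_idem]
    rw [add_assoc, CharTwo.add_self_eq_zero, add_zero, Function.update_eq_self]
  apply aux_sign_invol τ h2
  have hmem : ∀ x, x ∈ τ.support ↔ e (fun j => x j.1) ≠ 0 := by
    intro x
    rw [Equiv.Perm.mem_support, hτ, Ne, Function.update_eq_self_iff]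
    constructor
    · intro h h0; exact h (by rw [h0, add_zero])
    · intro h h0; exact h (by rwa [add_eq_left] at h0)
  have hsupp : τ.support = Finset.univ.filter (fun x => e (fun j => x j.1) ≠ 0) := by
    ext x; simp [hmem]
  have hcards : τ.support.card
      = Fintype.card {x : Fin n → F // e (fun j => x j.1) ≠ 0} := by
    rw [hsupp, Fintype.card_subtype]
  have hequiv : {x : Fin n → F // e (fun j => x j.1) ≠ 0}
      ≃ F × {y : {j : Fin n // j ≠ i} → F // e y ≠ 0} := by
    refine Equiv.trans ((Equiv.funSplitAt i F).subtypeEquiv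
      (q := fun p : F × ({j : Fin n // j ≠ i} → F) => e p.2 ≠ 0) fun x => Iff.rfl) ?_
    exact ⟨fun p => (p.1.1, ⟨p.1.2, p.2⟩), fun q => ⟨(q.1, q.2.1), q.2.2⟩,
      fun _ => rfl, fun _ => rfl⟩
  rw [hcards, Fintype.card_congr hequiv, Fintype.card_prod, hcard]
  exact Dvd.dvd.mul_right (pow_dvd_pow 2 hm) _

/-- Permutation given by multiplication by an invertible matrix. -/
noncomputable def mvPerm {n : ℕ} (M : Matrix (Fin n) (Fin n) F) (h : IsUnit M) :
    Equiv.Perm (Fin n → F) where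
  toFun := M.mulVec
  invFun := M⁻¹.mulVec
  left_inv x := by
    rw [Matrix.mulVec_mulVec, Matrix.nonsing_inv_mul M ((Matrix.isUnit_iff_isUnit_det M).mp h),
      Matrix.one_mulVec]
  right_inv x := by
    rw [Matrix.mulVec_mulVec, Matrix.mul_nonsing_inv M ((Matrix.isUnit_iff_isUnit_det M).mp h),
      Matrix.one_mulVec]

@[simp] lemma mvPerm_apply {n : ℕ} (M : Matrix (Fin n) (Fin n) F) (h : IsUnit M)
    (x : Fin n → F) : mvPerm M h x = M.mulVec x := rfl

lemma mvPerm_mul {n : ℕ} (M N : Matrix (Fin n) (Fin n) F) (hM : IsUnit M) (hN : IsUnit N)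
    (hMN : IsUnit (M * N)) : mvPerm (M * N) hMN = mvPerm M hM * mvPerm N hN := by
  ext x
  simp [Matrix.mulVec_mulVec]

lemma mvPerm_pow_apply {n : ℕ} (M : Matrix (Fin n) (Fin n) F) (h : IsUnit M) (k : ℕ) :
    ∀ x : Fin n → F, ((mvPerm M h) ^ k) x = (M ^ k).mulVec x := by
  induction k with
  | zero => intro x; simp [Matrix.one_mulVec]
  | succ k ih =>
    intro x
    rw [pow_succ, Equiv.Perm.mul_apply, mvPerm_apply, ih, Matrix.mulVec_mulVec, ← pow_succ]

end Field

section Field2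

variable {F : Type} [Field F] [Fintype F] [DecidableEq F]

lemma aux_sign_transvection (m n : ℕ) (hm : 2 ≤ m)
    (hcard : Fintype.card F = 2 ^ m) (t : Matrix.TransvectionStruct (Fin n) F)
    (h : IsUnit t.toMatrix) :
    Equiv.Perm.sign (mvPerm t.toMatrix h) = 1 := by
  apply aux_sign_update m n hm hcard t.i
    (fun y : {j : Fin n // j ≠ t.i} → F => t.c * y ⟨t.j, Ne.symm t.hij⟩)
  intro x
  rw [mvPerm_apply]
  show (Matrix.transvection t.i t.j t.c).mulVec x = _
  rw [Matrix.transvection, Matrix.add_mulVec, Matrix.one_mulVec, Matrix.single_mulVec]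
  funext k
  by_cases hk : k = t.i
  · subst hk
    simp [Function.update_self]
  · simp [Function.update_of_ne hk]

lemma aux_odd_card_sub_one (m : ℕ) (hm : 2 ≤ m) (hcard : Fintype.card F = 2 ^ m) :
    Odd (Fintype.card F - 1) := by
  have h2 : (2:ℕ) ∣ 2 ^ m := dvd_pow_self 2 (by omega)
  have h4 : 4 ≤ 2 ^ m := by
    calc (4:ℕ) = 2 ^ 2 := by norm_num
    _ ≤ 2 ^ m := Nat.pow_le_pow_right (by norm_num) hm
  rw [hcard]
  obtain ⟨c, hc⟩ := h2
  exact ⟨c - 1, by omega⟩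

lemma aux_sign_diagonal (m n : ℕ) (hm : 2 ≤ m)
    (hcard : Fintype.card F = 2 ^ m) (D : Fin n → F)
    (h : IsUnit (Matrix.diagonal D)) :
    Equiv.Perm.sign (mvPerm (Matrix.diagonal D) h) = 1 := by
  have hD : ∀ i, D i ≠ 0 := by
    intro i hi
    have hdet := (Matrix.isUnit_iff_isUnit_det _).mp h
    rw [Matrix.det_diagonal] at hdet
    rw [Finset.prod_eq_zero (Finset.mem_univ i) hi] at hdet
    exact (not_isUnit_zero hdet)
  apply aux_sign_eq_one_of_pow_odd _ (Fintype.card F - 1) (aux_odd_card_sub_one m hm hcard)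
  ext x
  rw [mvPerm_pow_apply, Matrix.diagonal_pow]
  have hpow : D ^ (Fintype.card F - 1) = fun _ => (1:F) := by
    funext i
    rw [Pi.pow_apply]
    exact FiniteField.pow_card_sub_one_eq_one (D i) (hD i)
  rw [hpow]
  have : Matrix.diagonal (fun _ : Fin n => (1:F)) = 1 := Matrix.diagonal_one
  rw [this, Matrix.one_mulVec]
  rfl

lemma mvPerm_congr {n : ℕ} (M N : Matrix (Fin n) (Fin n) F) (hM : IsUnit M)
    (hN : IsUnit N) (h : M = N) : mvPerm M hM = mvPerm N hN := by
  subst h; rfl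

lemma aux_sign_transvec_list (m n : ℕ) (hm : 2 ≤ m)
    (hcard : Fintype.card F = 2 ^ m) (L : List (Matrix.TransvectionStruct (Fin n) F))
    (h : IsUnit (L.map Matrix.TransvectionStruct.toMatrix).prod) :
    Equiv.Perm.sign (mvPerm (L.map Matrix.TransvectionStruct.toMatrix).prod h) = 1 := by
  induction L with
  | nil =>
    have : mvPerm ((List.nil.map Matrix.TransvectionStruct.toMatrix).prod) h = 1 := by
      ext x; simp [Matrix.one_mulVec]
    rw [this]; exact Equiv.Perm.sign_one
  | cons t L ih =>
    have ht : IsUnit t.toMatrix := by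
      rw [Matrix.isUnit_iff_isUnit_det, Matrix.TransvectionStruct.det]; exact isUnit_one
    have hL : IsUnit (L.map Matrix.TransvectionStruct.toMatrix).prod := by
      rw [Matrix.isUnit_iff_isUnit_det, Matrix.TransvectionStruct.det_toMatrix_prod]
      exact isUnit_one
    have heq : ((t :: L).map Matrix.TransvectionStruct.toMatrix).prod
        = t.toMatrix * (L.map Matrix.TransvectionStruct.toMatrix).prod := by
      simp
    rw [mvPerm_congr _ _ h (ht.mul hL) heq,
      mvPerm_mul _ _ ht hL (ht.mul hL), Equiv.Perm.sign_mul,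
      aux_sign_transvection m n hm hcard t ht, ih hL, one_mul]

end Field2

section Field3

variable {F : Type} [Field F] [Fintype F] [DecidableEq F]

lemma aux_sign_mulVec (m n : ℕ) (hm : 2 ≤ m)
    (hcard : Fintype.card F = 2 ^ m) (A : Matrix (Fin n) (Fin n) F) (hA : IsUnit A) :
    Equiv.Perm.sign (mvPerm A hA) = 1 := by
  obtain ⟨L, L', D, hdecomp⟩ := Matrix.Pivot.exists_list_transvec_mul_diagonal_mul_list_transvec A
  have hLu : IsUnit (L.map Matrix.TransvectionStruct.toMatrix).prod := by
    rw [Matrix.isUnit_iff_isUnit_det, Matrix.TransvectionStruct.det_toMatrix_prod]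
    exact isUnit_one
  have hLu' : IsUnit (L'.map Matrix.TransvectionStruct.toMatrix).prod := by
    rw [Matrix.isUnit_iff_isUnit_det, Matrix.TransvectionStruct.det_toMatrix_prod]
    exact isUnit_one
  have hDu : IsUnit (Matrix.diagonal D) := by
    rw [Matrix.isUnit_iff_isUnit_det]
    have hAdet := (Matrix.isUnit_iff_isUnit_det A).mp hA
    rw [hdecomp, Matrix.det_mul, Matrix.det_mul,
      Matrix.TransvectionStruct.det_toMatrix_prod, Matrix.TransvectionStruct.det_toMatrix_prod,
      one_mul, mul_one] at hAdet
    exact hAdet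
  rw [mvPerm_congr _ _ hA ((hLu.mul hDu).mul hLu') hdecomp,
    mvPerm_mul _ _ (hLu.mul hDu) hLu' ((hLu.mul hDu).mul hLu'),
    mvPerm_mul _ _ hLu hDu (hLu.mul hDu),
    Equiv.Perm.sign_mul, Equiv.Perm.sign_mul,
    aux_sign_transvec_list m n hm hcard L hLu,
    aux_sign_transvec_list m n hm hcard L' hLu',
    aux_sign_diagonal m n hm hcard D hDu]
  norm_num

lemma aux_sign_affine (m n : ℕ) (hm : 2 ≤ m) (hn : 1 ≤ n)
    (hcard : Fintype.card F = 2 ^ m) (A : Matrix (Fin n) (Fin n) F) (b : Fin n → F)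
    (hA : IsUnit A) (τ : Equiv.Perm (Fin n → F))
    (hτ : ∀ x, τ x = A.mulVec x + b) :
    Equiv.Perm.sign τ = 1 := by
  haveI := aux_char_two (F := F) m hm hcard
  have hb : b + b = 0 := funext fun i => by
    rw [Pi.add_apply]; exact CharTwo.add_self_eq_zero _
  have hτeq : τ = Equiv.addLeft b * mvPerm A hA := by
    ext x
    rw [hτ]
    simp only [Equiv.Perm.mul_apply, mvPerm_apply, Equiv.coe_addLeft]
    exact add_comm _ _
  rw [hτeq, Equiv.Perm.sign_mul, aux_sign_mulVec m n hm hcard A hA, mul_one]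
  by_cases hb0 : b = 0
  · have : Equiv.addLeft b = (1 : Equiv.Perm (Fin n → F)) := by
      ext x; simp [hb0]
    rw [this]; exact Equiv.Perm.sign_one
  · apply aux_sign_invol
    · ext x
      simp only [Equiv.Perm.mul_apply, Equiv.Perm.one_apply, Equiv.coe_addLeft]
      rw [← add_assoc, hb, zero_add]
    · have hsupp : (Equiv.addLeft b).support = Finset.univ := by
        ext x
        simp only [Equiv.Perm.mem_support, Finset.mem_univ, iff_true, Equiv.coe_addLeft]
        intro hx
        exact hb0 (by rwa [add_eq_right] at hx)
      rw [hsupp, Finset.card_univ, Fintype.card_fun, hcard, Fintype.card_fin, ← pow_mul]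
      have h2 : 2 ≤ m * n := le_trans hm (Nat.le_mul_of_pos_right m hn)
      calc (4:ℕ) = 2 ^ 2 := by norm_num
      _ ∣ 2 ^ (m * n) := pow_dvd_pow 2 h2

end Field3

/-- For `q = 2^m`, `m ≥ 2`, every element of the tame subgroup
(the subgroup of permutations of `F_q^n` generated by affine automorphisms
and elementary automorphisms) is an even permutation. -/
theorem stmt18 (m n : ℕ) (hm : 2 ≤ m) (hn : 1 ≤ n)
    (F : Type) [Field F] [Fintype F] [DecidableEq F]
    (hcard : Fintype.card F = 2 ^ m)
    (σ : Equiv.Perm (Fin n → F))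
    (hσ : σ ∈ Subgroup.closure
      ({τ | ∃ (A : Matrix (Fin n) (Fin n) F) (b : Fin n → F),
          IsUnit A ∧ ∀ x, τ x = A.mulVec x + b} ∪
       {τ | ∃ (i : Fin n) (a : MvPolynomial {j : Fin n // j ≠ i} F),
          ∀ x, τ x = Function.update x i
            (x i + MvPolynomial.eval (fun j => x j.1) a)} :
        Set (Equiv.Perm (Fin n → F)))) :
    Equiv.Perm.sign σ = 1 := by
  have hle : Subgroup.closure
      ({τ | ∃ (A : Matrix (Fin n) (Fin n) F) (b : Fin n → F),
          IsUnit A ∧ ∀ x, τ x = A.mulVec x + b} ∪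
       {τ | ∃ (i : Fin n) (a : MvPolynomial {j : Fin n // j ≠ i} F),
          ∀ x, τ x = Function.update x i
            (x i + MvPolynomial.eval (fun j => x j.1) a)} :
        Set (Equiv.Perm (Fin n → F)))
      ≤ (Equiv.Perm.sign (α := Fin n → F)).ker := by
    rw [Subgroup.closure_le]
    rintro τ (⟨A, b, hA, hτ⟩ | ⟨i, a, hτ⟩)
    · exact MonoidHom.mem_ker.mpr (aux_sign_affine m n hm hn hcard A b hA τ hτ)
    · exact MonoidHom.mem_ker.mpr
        (aux_sign_update m n hm hcard i (fun y => MvPolynomial.eval y a) τ hτ)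
  exact MonoidHom.mem_ker.mp (hle hσ)
end

section
/- Let q be an odd prime power and n ≥ 1. The set of permutations of F_q^n induced by elementary automorphisms generates a subgroup of the alternating group Alt(F_q^n); i.e., π_q(EA_n(F_q)) ⊆ Alt(F_q^n). -/
theorem stmt19_aux {n : ℕ} {F : Type} [Field F] [Fintype F] [DecidableEq F]
    (τ : Equiv.Perm (Fin n → F)) (i : Fin n) (a : MvPolynomial {j : Fin n // j ≠ i} F)
    (h : ∀ x, τ x = Function.update x i
            (x i + MvPolynomial.eval (fun j => x j.1) a)) :
    ∀ (k : ℕ) (x : Fin n → F), (τ ^ k) x = Function.update x i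
      (x i + k • MvPolynomial.eval (fun j => x j.1) a) := by
  intro k
  induction k with
  | zero => intro x; simp
  | succ k ih =>
    intro x
    rw [pow_succ', Equiv.Perm.mul_apply, ih, h]
    have hcoord : ∀ j : {j : Fin n // j ≠ i},
        Function.update x i (x i + k • MvPolynomial.eval (fun j => x j.1) a) j.1 = x j.1 := by
      intro j; exact Function.update_of_ne j.2 _ x
    rw [Function.update_idem]
    simp only [Function.update_self, hcoord]
    rw [succ_nsmul]
    ring_nf

/-- For `q` odd, the subgroup of permutations of `F_q^n`
generated by elementary automorphisms is contained in the alternating group,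
i.e. every element of it is even. -/
theorem stmt19 (q n : ℕ) (hq : Odd q) (hn : 1 ≤ n)
    (F : Type) [Field F] [Fintype F] [DecidableEq F] (hcard : Fintype.card F = q)
    (σ : Equiv.Perm (Fin n → F))
    (hσ : σ ∈ Subgroup.closure
      ({τ | ∃ (i : Fin n) (a : MvPolynomial {j : Fin n // j ≠ i} F),
          ∀ x, τ x = Function.update x i
            (x i + MvPolynomial.eval (fun j => x j.1) a)} :
        Set (Equiv.Perm (Fin n → F)))) :
    Equiv.Perm.sign σ = 1 := by
  have key : Subgroup.closure
      ({τ | ∃ (i : Fin n) (a : MvPolynomial {j : Fin n // j ≠ i} F),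
          ∀ x, τ x = Function.update x i
            (x i + MvPolynomial.eval (fun j => x j.1) a)} :
        Set (Equiv.Perm (Fin n → F))) ≤ Equiv.Perm.sign.ker := by
    rw [Subgroup.closure_le]
    rintro τ ⟨i, a, h⟩
    have hq1 : τ ^ q = 1 := by
      apply Equiv.ext; intro x
      show (τ ^ q) x = x
      rw [stmt19_aux τ i a h q x, ← hcard, card_nsmul_eq_zero, add_zero,
        Function.update_eq_self]
    have hs : (Equiv.Perm.sign τ) ^ q = 1 := by
      rw [← map_pow, hq1, map_one]
    have : Equiv.Perm.sign τ = 1 ∨ Equiv.Perm.sign τ = -1 :=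
      Int.units_eq_one_or _
    rcases this with h1 | h1
    · exact h1
    · rw [h1, hq.neg_one_pow] at hs
      exact absurd hs (by decide)
  exact key hσ
end
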